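/- arXiv:1311.0185 — 6 statements merged into one kernel-verified Lean document; each statement's English description precedes it below -/
import Mathlib

section
/- Let f, f' : A* → B* and g, g' : B* → C* be morphisms such that f is conjugate to f' and g is conjugate to g'. Then the compositions g∘f and g'∘f' are conjugate. -/
open List

/-- The prefix of length `n` of an infinite word `x`. -/
def wordTake {A : Type*} (x : ℕ → A) (n : ℕ) : List A := (List.range n).map x

/-- The finite word `u` occurs in the infinite word `x` at position `i`. -/
def OccursAt {A : Type*} (u : List A) (x : ℕ → A) (i : ℕ) : Prop :=
  (List.range u.length).map (fun k => x (i + k)) = u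

/-- `u` is a factor of the infinite word `x`. -/
def IsFactor {A : Type*} (u : List A) (x : ℕ → A) : Prop := ∃ i, OccursAt u x i

/-- A palindrome is a finite word equal to its reversal. -/
def IsPalindrome {A : Type*} (u : List A) : Prop := u.reverse = u

/-- The number of distinct palindromic factors of a finite word `u`
(including the empty word). -/
noncomputable def palCount {A : Type*} (u : List A) : ℕ :=
  {v : List A | v <:+: u ∧ IsPalindrome v}.ncard

/-- A finite word `u` is rich if it has `|u| + 1` distinct palindromic factors. -/
def RichList {A : Type*} (u : List A) : Prop := palCount u = u.length + 1

/-- An infinite word is rich if all of its factors are rich. -/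
def RichWord {A : Type*} (x : ℕ → A) : Prop := ∀ u, IsFactor u x → RichList u

/-- The defect of a finite word. -/
noncomputable def defect {A : Type*} (u : List A) : ℕ := u.length + 1 - palCount u

/-- An infinite word has finite defect if the defects of its prefixes are bounded. -/
def FiniteDefect {A : Type*} (x : ℕ → A) : Prop :=
  ∃ C, ∀ n, defect (wordTake x n) ≤ C

/-- The extension of a morphism (given by its values on letters) to finite words. -/
def listApply {A B : Type*} (f : A → List B) (w : List A) : List B := w.flatMap f

/-- A morphism is non-erasing if the image of every letter is non-empty. -/
def NonErasing {A B : Type*} (f : A → List B) : Prop := ∀ a, f a ≠ []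

/-- `y` is the image of the infinite word `x` under the morphism `f`, i.e. `y = f(x)` :
the image of every prefix of `x` is a prefix of `y`. -/
def IsMorphicImage {A B : Type*} (f : A → List B) (x : ℕ → A) (y : ℕ → B) : Prop :=
  ∀ k, ∃ n, listApply f (wordTake x k) = wordTake y n

/-- A substitution is primitive if some power `τ^N` (`N ≥ 1`) maps every letter to a word
containing every letter. -/
def Primitive {A : Type*} (τ : A → List A) : Prop :=
  ∃ N : ℕ, 1 ≤ N ∧ ∀ a b : A, b ∈ (listApply τ)^[N] [a]

/-- An infinite word is pure primitive morphic if it is a fixed point of a primitive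
substitution. -/
def PurePrimitiveMorphic {A : Type*} (x : ℕ → A) : Prop :=
  ∃ τ : A → List A, NonErasing τ ∧ Primitive τ ∧ IsMorphicImage τ x x

/-- An infinite word is primitive morphic if it is the morphic image of a pure primitive
morphic word over some finite alphabet. -/
def PrimitiveMorphic {B : Type*} (y : ℕ → B) : Prop :=
  ∃ (A : Type) (_ : Fintype A) (f : A → List B) (x : ℕ → A),
    NonErasing f ∧ PurePrimitiveMorphic x ∧ IsMorphicImage f x y

/-- A morphism is of class P if `f(a) = p qₐ` with `p` and each `qₐ` palindromes. -/
def ClassP {A B : Type*} (f : A → List B) : Prop :=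
  ∃ p : List B, IsPalindrome p ∧ ∀ a, ∃ q : List B, IsPalindrome q ∧ f a = p ++ q

/-- Two morphisms are conjugate if `f(a)u = u g(a)` for all `a`, or `u f(a) = g(a) u`
for all `a`, for some finite word `u`. -/
def Conjugate {A B : Type*} (f g : A → List B) : Prop :=
  ∃ u : List B, (∀ a, f a ++ u = u ++ g a) ∨ (∀ a, u ++ f a = g a ++ u)

/-- Class P' : morphisms conjugate to some class P morphism. -/
def ClassP' {A B : Type*} (f : A → List B) : Prop :=
  ∃ g : A → List B, ClassP g ∧ Conjugate f g

/-- `FP'` : infinite words fixed by some primitive substitution of class P'. -/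
def InFPprime {A : Type*} (x : ℕ → A) : Prop :=
  ∃ τ : A → List A, NonErasing τ ∧ Primitive τ ∧ ClassP' τ ∧ IsMorphicImage τ x x

/-- The number of occurrences of `u` in the finite word `w`. -/
noncomputable def occCount {A : Type*} (u w : List A) : ℕ :=
  {i : ℕ | i + u.length ≤ w.length ∧ (w.drop i).take u.length = u}.ncard

/-- `v` is a first return to the non-empty factor `u` in `x` : `vu` is a factor of `x`
beginning (and ending) in `u` and containing exactly two occurrences of `u`;
`vu` is then the corresponding complete first return to `u`. -/
def FirstReturn {A : Type*} (u : List A) (x : ℕ → A) (v : List A) : Prop :=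
  u ≠ [] ∧ IsFactor (v ++ u) x ∧ u <+: (v ++ u) ∧ occCount u (v ++ u) = 2

/-- An infinite word is uniformly recurrent if every factor occurs in every sufficiently
long factor. -/
def UniformlyRecurrent {A : Type*} (x : ℕ → A) : Prop :=
  ∀ u : List A, IsFactor u x → ∃ n, ∀ v : List A, IsFactor v x → v.length = n → u <:+: v

/-- `d` is the derived word of `x` at the non-empty prefix `u` : `x` factors as a
concatenation `r 0, r 1, r 2, …` of first returns to `u` (each complete first return
`r n ++ u` occurring at the corresponding partial-sum position), and `d n` is the rank
of `r n` in the order of first occurrence, i.e. the number of distinct return words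
appearing strictly before the first occurrence of `r n`. -/
def IsDerivedWord {A : Type*} (x : ℕ → A) (u : List A) (d : ℕ → ℕ) : Prop :=
  ∃ r : ℕ → List A,
    (∀ n, FirstReturn u x (r n)) ∧
    (∀ n, OccursAt (r n ++ u) x (∑ i ∈ Finset.range n, (r i).length)) ∧
    (∀ n, d n = (r '' {k | k < sInf {k | r k = r n}}).ncard)

/-- Class P_ret of Balková et al.: a morphism injective on letters such that for some
palindrome `p` (the marker), each `f(a)p` is a palindrome beginning and ending in `p`
and containing exactly two occurrences of `p`. -/
def ClassPret {A B : Type*} (f : A → List B) : Prop :=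
  (∀ a b : A, a ≠ b → f a ≠ f b) ∧
  ∃ p : List B, IsPalindrome p ∧ ∀ a,
    IsPalindrome (f a ++ p) ∧ p <+: (f a ++ p) ∧ p <:+ (f a ++ p) ∧
      occCount p (f a ++ p) = 2

lemma listApply_append {A B : Type*} (f : A → List B) (w₁ w₂ : List A) :
    listApply f (w₁ ++ w₂) = listApply f w₁ ++ listApply f w₂ := by
  simp [listApply]

lemma conj_ext1 {B C : Type*} {g g' : B → List C} {v : List C}
    (h : ∀ b, g b ++ v = v ++ g' b) (w : List B) :
    listApply g w ++ v = v ++ listApply g' w := by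
  induction w with
  | nil => simp [listApply]
  | cons a w ih =>
      simp only [listApply, List.flatMap_cons] at *
      rw [List.append_assoc, ih, ← List.append_assoc, h, List.append_assoc]

lemma conj_ext2 {B C : Type*} {g g' : B → List C} {v : List C}
    (h : ∀ b, v ++ g b = g' b ++ v) (w : List B) :
    v ++ listApply g w = listApply g' w ++ v := by
  induction w with
  | nil => simp [listApply]
  | cons a w ih =>
      simp only [listApply, List.flatMap_cons] at *
      rw [← List.append_assoc, h, List.append_assoc, ih, ← List.append_assoc]

lemma conjugate_symm {A B : Type*} {f g : A → List B} (h : Conjugate f g) :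
    Conjugate g f := by
  obtain ⟨u, h | h⟩ := h
  · exact ⟨u, Or.inr fun a => (h a).symm⟩
  · exact ⟨u, Or.inl fun a => (h a).symm⟩

lemma base_case {A B C : Type*} {f f' : A → List B} {g g' : B → List C} {u : List B}
    {v : List C} (hu : ∀ a, f a ++ u = u ++ f' a) (hv : ∀ b, g b ++ v = v ++ g' b) :
    Conjugate (fun a => listApply g (f a)) (fun a => listApply g' (f' a)) := by
  refine ⟨listApply g u ++ v, Or.inl fun a => ?_⟩
  have h1 : listApply g (f a) ++ listApply g u = listApply g u ++ listApply g (f' a) := by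
    rw [← listApply_append, ← listApply_append, hu]
  calc listApply g (f a) ++ (listApply g u ++ v)
      = (listApply g (f a) ++ listApply g u) ++ v := by rw [List.append_assoc]
    _ = (listApply g u ++ listApply g (f' a)) ++ v := by rw [h1]
    _ = listApply g u ++ (listApply g (f' a) ++ v) := by rw [List.append_assoc]
    _ = listApply g u ++ (v ++ listApply g' (f' a)) := by rw [conj_ext1 hv]
    _ = (listApply g u ++ v) ++ listApply g' (f' a) := by rw [List.append_assoc]

lemma mixed_case {A B C : Type*} {f f' : A → List B} {g g' : B → List C} {u : List B}
    {v : List C} (hu : ∀ a, f a ++ u = u ++ f' a) (hv : ∀ b, v ++ g b = g' b ++ v) :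
    Conjugate (fun a => listApply g (f a)) (fun a => listApply g' (f' a)) := by
  have E : v ++ listApply g u = listApply g' u ++ v := conj_ext2 hv u
  have hlen : (listApply g u).length = (listApply g' u).length := by
    have := congrArg List.length E
    simp only [List.length_append] at this
    omega
  have key : ∀ a, listApply g (f a) ++ listApply g u
      = listApply g u ++ listApply g (f' a) := by
    intro a; rw [← listApply_append, ← listApply_append, hu]
  have key' : ∀ a, listApply g' (f a) ++ listApply g' u
      = listApply g' u ++ listApply g' (f' a) := by
    intro a; rw [← listApply_append, ← listApply_append, hu]
  rcases le_or_gt v.length (listApply g u).length with hle | hlt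
  · -- v is a suffix of listApply g u
    have hv_eq : v = (listApply g u).drop ((listApply g u).length - v.length) := by
      have h1 := congrArg (List.drop (listApply g u).length) E
      rw [List.drop_append, List.drop_append] at h1
      rw [List.drop_of_length_le hle, List.nil_append] at h1
      rw [hlen, Nat.sub_self, List.drop_zero, List.drop_length, List.nil_append] at h1
      rw [hlen]
      exact h1.symm
    obtain ⟨t, hGt⟩ : ∃ t, listApply g u = t ++ v :=
      ⟨(listApply g u).take ((listApply g u).length - v.length), by
        conv_lhs => rw [← List.take_append_drop ((listApply g u).length - v.length)
          (listApply g u)]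
        rw [← hv_eq]⟩
    refine ⟨t, Or.inl fun a => ?_⟩
    show listApply g (f a) ++ t = t ++ listApply g' (f' a)
    apply List.append_cancel_right (bs := v)
    calc (listApply g (f a) ++ t) ++ v
        = listApply g (f a) ++ listApply g u := by rw [List.append_assoc, ← hGt]
      _ = listApply g u ++ listApply g (f' a) := key a
      _ = t ++ (v ++ listApply g (f' a)) := by rw [hGt, List.append_assoc]
      _ = t ++ (listApply g' (f' a) ++ v) := by rw [conj_ext2 hv (f' a)]
      _ = (t ++ listApply g' (f' a)) ++ v := by rw [List.append_assoc]
  · -- listApply g' u is a prefix of v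
    have hG'pre : listApply g' u = v.take (listApply g' u).length := by
      have h1 := congrArg (List.take (listApply g' u).length) E
      rw [List.take_append, List.take_append] at h1
      rw [List.take_length, Nat.sub_self, List.take_zero, List.append_nil] at h1
      rw [show (listApply g' u).length - v.length = 0 by omega, List.take_zero,
        List.append_nil] at h1
      exact h1.symm
    obtain ⟨s, hvs⟩ : ∃ s, v = listApply g' u ++ s :=
      ⟨v.drop (listApply g' u).length, by
        conv_lhs => rw [← List.take_append_drop (listApply g' u).length v]
        rw [← hG'pre]⟩
    have hA : s ++ listApply g u = listApply g' u ++ s := by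
      apply List.append_cancel_left (as := listApply g' u)
      rw [← List.append_assoc, ← hvs, E]
    refine ⟨s, Or.inr fun a => ?_⟩
    show s ++ listApply g (f a) = listApply g' (f' a) ++ s
    apply List.append_cancel_right (bs := listApply g u)
    apply List.append_cancel_left (as := listApply g' u)
    calc listApply g' u ++ ((s ++ listApply g (f a)) ++ listApply g u)
        = (v ++ listApply g (f a)) ++ listApply g u := by
          simp [hvs, List.append_assoc]
      _ = (v ++ listApply g (f a ++ u)) := by rw [listApply_append, List.append_assoc]
      _ = listApply g' (f a ++ u) ++ v := conj_ext2 hv _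
      _ = (listApply g' (f a) ++ listApply g' u) ++ v := by rw [listApply_append]
      _ = (listApply g' u ++ listApply g' (f' a)) ++ v := by rw [key' a]
      _ = listApply g' u ++ (listApply g' (f' a) ++ (listApply g' u ++ s)) := by
          simp [hvs, List.append_assoc]
      _ = listApply g' u ++ (listApply g' (f' a) ++ (s ++ listApply g u)) := by rw [hA]
      _ = listApply g' u ++ ((listApply g' (f' a) ++ s) ++ listApply g u) := by
          simp [List.append_assoc]

/-- Conjugation of morphisms is compatible with composition. -/
theorem conjugate_comp {A B C : Type*} (f f' : A → List B) (g g' : B → List C)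
    (hf : Conjugate f f') (hg : Conjugate g g') :
    Conjugate (fun a => listApply g (f a)) (fun a => listApply g' (f' a)) := by
  obtain ⟨u, hu | hu⟩ := hf <;> obtain ⟨v, hv | hv⟩ := hg
  · exact base_case hu hv
  · exact mixed_case hu hv
  · exact conjugate_symm (mixed_case (fun a => (hu a).symm) (fun b => (hv b).symm))
  · exact conjugate_symm (base_case (fun a => (hu a).symm) (fun b => (hv b).symm))
end

section
/- Let y be a rich, uniformly recurrent infinite word beginning in the letter 0. Then the derived word D_0(y) of y at the prefix 0 is rich and begins in the letter 0 of the derived alphabet. -/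
open List

namespace DerivedAux

variable {A : Type*}

lemma pal_iff {u : List A} :
    IsPalindrome u ↔ ∀ i (h : i < u.length), u[i] = u[u.length - 1 - i] := by
  constructor
  · intro hp i h
    have h2 := List.getElem_reverse (l := u) (i := i) (by simpa using h)
    rw [List.getElem_of_eq hp] at h2
    exact h2
  · intro h
    apply List.ext_getElem (by simp)
    intro n h1 h2
    rw [List.getElem_reverse]
    have hn : u.length - 1 - n < u.length := by
      simp at h1; omega
    rw [h _ hn]
    congr 1
    simp at h1
    omega

lemma infix_finite (u : List A) : {v : List A | v <:+: u}.Finite := by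
  apply Set.Finite.subset (List.finite_toSet (u.tails.flatMap List.inits))
  intro v hv
  obtain ⟨t, hp, hs⟩ := List.infix_iff_prefix_suffix.mp hv
  exact List.mem_flatMap.mpr ⟨t, (List.mem_tails _ _).mpr hs, (List.mem_inits _ _).mpr hp⟩

lemma palSet_finite (u : List A) : {v : List A | v <:+: u ∧ IsPalindrome v}.Finite :=
  (infix_finite u).subset (fun _ h => h.1)

lemma palCount_nil : palCount ([] : List A) = 1 := by
  have : {v : List A | v <:+: [] ∧ IsPalindrome v} = {[]} := by
    ext v
    simp only [Set.mem_setOf_eq, Set.mem_singleton_iff]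
    constructor
    · rintro ⟨h, -⟩; exact List.eq_nil_of_infix_nil h
    · rintro rfl; exact ⟨List.infix_rfl, rfl⟩
  rw [palCount, this, Set.ncard_singleton]

lemma infix_concat' {v p : List A} {c : A} (h : v <:+: p ++ [c]) :
    v <:+: p ∨ v <:+ p ++ [c] := by
  obtain ⟨s, t, hst⟩ := h
  rcases List.eq_nil_or_concat t with rfl | ⟨l, b, rfl⟩
  · right; exact ⟨s, by simpa using hst⟩
  · left
    have h2 : (s ++ v ++ l) ++ [b] = p ++ [c] := by
      simpa [List.concat_eq_append, List.append_assoc] using hst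
    have := List.append_inj h2 (by
      have := congrArg List.length h2; simp at this ⊢; omega)
    exact ⟨s, l, by simpa [List.append_assoc] using this.1⟩

lemma suffix_of_suffix_le {u v w : List A} (hu : u <:+ w) (hv : v <:+ w)
    (h : u.length ≤ v.length) : u <:+ v := by
  obtain ⟨su, rfl⟩ := hu
  obtain ⟨sv, hsv⟩ := hv
  have hl : sv.length ≤ su.length := by
    have := congrArg List.length hsv; simp at this; omega
  have h1 : u = (su ++ u).drop su.length := List.drop_left.symm
  have h2 : v = (su ++ u).drop sv.length := by
    rw [← hsv]; exact List.drop_left.symm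
  rw [h1, h2, show su.length = sv.length + (su.length - sv.length) by omega,
    ← List.drop_drop]
  exact List.drop_suffix _ _

lemma pal_suffix_infix_dropLast {v P w : List A} (hv : IsPalindrome v)
    (hP : IsPalindrome P) (hvP : v <:+ P) (hPw : P <:+ w)
    (hlt : v.length < P.length) : v <:+: w.dropLast := by
  obtain ⟨t, ht⟩ := hvP
  have hpre : v ++ t.reverse = P := by
    have := congrArg List.reverse ht
    rw [List.reverse_append, hv, hP] at this
    exact this
  obtain ⟨s, hs⟩ := hPw
  have htne : t.reverse ≠ [] := by
    intro h
    have := congrArg List.length hpre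
    simp [h] at this; omega
  have hw : w = (s ++ v) ++ t.reverse := by
    rw [← hs, ← hpre]; simp [List.append_assoc]
  refine ⟨s, t.reverse.dropLast, ?_⟩
  rw [hw, List.dropLast_append_of_ne_nil htne]

lemma getElem_idx {l : List A} {i j : ℕ} (hij : i = j) (hi : i < l.length) :
    l[i]'hi = l[j]'(hij ▸ hi) := by subst hij; rfl

lemma dropLast_map_range {B : Type*} (f : ℕ → B) (n : ℕ) :
    ((List.range (n + 1)).map f).dropLast = (List.range n).map f := by
  rw [List.range_succ, List.map_append]
  simp only [List.map_cons, List.map_nil]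
  exact List.dropLast_concat

/-- Unioccurrent palindromic suffix. -/
def UPS (w : List A) : Prop :=
  ∃ P : List A, IsPalindrome P ∧ P <:+ w ∧ ¬ P <:+: w.dropLast

lemma rich_step {p : List A} {c : A} (hups : UPS (p ++ [c])) (hp : RichList p) :
    RichList (p ++ [c]) := by
  obtain ⟨P, hPpal, hPsuf, hPnin⟩ := hups
  rw [List.dropLast_concat] at hPnin
  have key : {v : List A | v <:+: p ++ [c] ∧ IsPalindrome v}
      = insert P {v : List A | v <:+: p ∧ IsPalindrome v} := by
    ext v
    simp only [Set.mem_setOf_eq, Set.mem_insert_iff]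
    constructor
    · rintro ⟨hinf, hpal⟩
      rcases infix_concat' hinf with h | h
      · exact Or.inr ⟨h, hpal⟩
      · by_cases hvp : v <:+: p
        · exact Or.inr ⟨hvp, hpal⟩
        · left
          rcases lt_trichotomy v.length P.length with h1 | h1 | h1
          · exfalso
            have h2 := pal_suffix_infix_dropLast hpal hPpal
              (suffix_of_suffix_le h hPsuf h1.le) hPsuf h1
            rw [List.dropLast_concat] at h2
            exact hvp h2
          · exact (suffix_of_suffix_le h hPsuf h1.le).eq_of_length h1
          · exfalso
            have h2 := pal_suffix_infix_dropLast hPpal hpal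
              (suffix_of_suffix_le hPsuf h h1.le) h h1
            rw [List.dropLast_concat] at h2
            exact hPnin h2
    · rintro (rfl | ⟨hinf, hpal⟩)
      · exact ⟨hPsuf.isInfix, hPpal⟩
      · exact ⟨hinf.trans (List.prefix_append p [c]).isInfix, hpal⟩
  have hPnotin : P ∉ {v : List A | v <:+: p ∧ IsPalindrome v} := fun h => hPnin h.1
  rw [RichList, palCount, key,
    Set.ncard_insert_of_notMem hPnotin (palSet_finite p)]
  rw [RichList, palCount] at hp
  simp [hp]

lemma rich_of_prefixes_ups (w : List A) (h : ∀ p : List A, p ≠ [] → p <+: w → UPS p) :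
    RichList w := by
  induction w using List.reverseRecOn with
  | nil => simp [RichList, palCount_nil]
  | append_singleton p c ih =>
    exact rich_step (h _ (by simp) List.prefix_rfl)
      (ih fun q hq hq2 => h q hq (hq2.trans (List.prefix_append p [c])))

lemma ups_of_rich {w : List A} (hw : w ≠ []) (h1 : RichList w)
    (h2 : RichList w.dropLast) : UPS w := by
  by_contra hn
  rw [UPS] at hn
  push_neg at hn
  have hw' : w.dropLast ++ [w.getLast hw] = w := List.dropLast_concat_getLast hw
  have hset : {v : List A | v <:+: w ∧ IsPalindrome v}
      = {v : List A | v <:+: w.dropLast ∧ IsPalindrome v} := by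
    ext v
    simp only [Set.mem_setOf_eq]
    constructor
    · rintro ⟨hinf, hpal⟩
      refine ⟨?_, hpal⟩
      rw [← hw'] at hinf
      rcases infix_concat' hinf with h | h
      · exact h
      · exact hn v hpal (hw' ▸ h)
    · rintro ⟨hinf, hpal⟩
      exact ⟨hinf.trans (List.dropLast_prefix w).isInfix, hpal⟩
  have hc : palCount w = palCount w.dropLast := congrArg Set.ncard hset
  rw [h1, h2] at hc
  have : w.length ≠ 0 := by simpa using hw
  rw [List.length_dropLast] at hc
  omega

section Occurs

variable {x : ℕ → A}

lemma occursAt_iff {u : List A} {i : ℕ} :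
    OccursAt u x i ↔ ∀ k (h : k < u.length), x (i + k) = u[k] := by
  rw [OccursAt]
  constructor
  · intro h k hk
    rw [List.getElem_of_eq h.symm hk]
    simp
  · intro h
    apply List.ext_getElem (by simp)
    intro n h1 h2
    rw [List.getElem_map, List.getElem_range]
    exact h n h2

lemma occursAt_sub {u v s t : List A} {i : ℕ} (h : s ++ v ++ t = u)
    (hu : OccursAt u x i) : OccursAt v x (i + s.length) := by
  subst h
  rw [occursAt_iff] at hu ⊢
  intro k hk
  have hlen : s.length + k < (s ++ v ++ t).length := by
    simp; omega
  have h2 := hu (s.length + k) hlen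
  rw [← add_assoc] at h2
  have h3 : (s ++ v ++ t)[s.length + k]'hlen = v[k] := by
    rw [List.getElem_append_left (show s.length + k < (s ++ v).length by simp; omega)]
    rw [List.getElem_append_right (by omega)]
    simp
  exact h2.trans h3

lemma occursAt_prefix {u v : List A} {i : ℕ} (h : v <+: u) (hu : OccursAt u x i) :
    OccursAt v x i := by
  obtain ⟨t, ht⟩ := h
  have := occursAt_sub (s := []) (by simpa using ht) hu
  simpa using this

lemma occursAt_append {u v : List A} {i : ℕ} (hu : OccursAt u x i)
    (hv : OccursAt v x (i + u.length)) : OccursAt (u ++ v) x i := by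
  rw [occursAt_iff] at hu hv ⊢
  intro k hk
  rcases lt_or_ge k u.length with h | h
  · rw [List.getElem_append_left h]
    exact hu k h
  · rw [List.getElem_append_right h]
    have := hv (k - u.length) (by simp at hk; omega)
    rw [← this]
    congr 1
    omega

lemma isFactor_of_infix {v u : List A} (h : v <:+: u) (hu : IsFactor u x) :
    IsFactor v x := by
  obtain ⟨i, hi⟩ := hu
  obtain ⟨s, t, hst⟩ := h
  exact ⟨i + s.length, occursAt_sub hst hi⟩

end Occurs

lemma two_occ {a : A} {w : List A} (hw2 : 2 ≤ w.length)
    (h0 : w[0]'(by omega) = a) (hl : w[w.length-1]'(by omega) = a)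
    (hc : occCount [a] w = 2) :
    ∀ j (hj : j < w.length), (w[j] = a ↔ j = 0 ∨ j = w.length - 1) := by
  have hset : {i : ℕ | i + ([a] : List A).length ≤ w.length ∧ (w.drop i).take ([a] : List A).length = [a]}
      = {i : ℕ | ∃ h : i < w.length, w[i]'h = a} := by
    ext i
    simp only [Set.mem_setOf_eq, List.length_singleton]
    constructor
    · rintro ⟨h1, h2⟩
      have hi : i < w.length := by omega
      rw [List.drop_eq_getElem_cons hi, show (1:ℕ) = 0+1 from rfl,
        List.take_succ_cons, List.take_zero] at h2
      injection h2 with h3 _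
      exact ⟨hi, h3⟩
    · rintro ⟨hi, h2⟩
      refine ⟨by omega, ?_⟩
      rw [List.drop_eq_getElem_cons hi, show (1:ℕ) = 0+1 from rfl,
        List.take_succ_cons, List.take_zero, h2]
  rw [occCount, hset] at hc
  have hpair : ({0, w.length - 1} : Set ℕ) ⊆ {i : ℕ | ∃ h : i < w.length, w[i]'h = a} := by
    rintro i (rfl | rfl)
    · exact ⟨by omega, h0⟩
    · exact ⟨by omega, hl⟩
  have hfin : {i : ℕ | ∃ h : i < w.length, w[i]'h = a}.Finite :=
    (Set.finite_Iio w.length).subset (fun i hi => hi.1)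
  have hcard : ({0, w.length - 1} : Set ℕ).ncard = 2 := Set.ncard_pair (by omega)
  have heq := Set.eq_of_subset_of_ncard_le hpair (by omega) hfin
  intro j hj
  constructor
  · intro hja
    have : j ∈ {i : ℕ | ∃ h : i < w.length, w[i]'h = a} := ⟨hj, hja⟩
    rw [← heq] at this
    simpa using this
  · rintro (rfl | rfl)
    · exact h0
    · exact hl

def BlockP (a : A) (w : List A) : Prop :=
  w ≠ [] ∧ ∀ j (h : j < w.length), (w[j]'h = a ↔ j = 0)

lemma flatten_head {a : A} {l : List (List A)} (hb : ∀ w ∈ l, BlockP a w)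
    (h : 0 < l.flatten.length) : l.flatten[0] = a := by
  cases l with
  | nil => simp at h
  | cons w t =>
    have hw := hb w (by simp)
    have hwl : 0 < w.length := List.length_pos_iff.mpr hw.1
    simp only [List.flatten_cons]
    rw [List.getElem_append_left hwl]
    exact (hw.2 0 hwl).mpr rfl

lemma not_lt_head {a : A} {w₁ w₂ : List A} {t₁ t₂ : List (List A)}
    (hb1 : ∀ w ∈ w₁ :: t₁, BlockP a w) (hb2 : ∀ w ∈ w₂ :: t₂, BlockP a w)
    (hfl : (w₁ :: t₁).flatten = (w₂ :: t₂).flatten) : ¬ w₁.length < w₂.length := by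
  intro hlt
  have h1 : w₁ ++ t₁.flatten = w₂ ++ t₂.flatten := by simpa using hfl
  have hW1 := hb1 w₁ (by simp)
  have hW2 := hb2 w₂ (by simp)
  have hw1pos : 0 < w₁.length := List.length_pos_iff.mpr hW1.1
  have hlen : w₁.length < (w₁ ++ t₁.flatten).length := by
    have := congrArg List.length h1
    simp at this ⊢
    omega
  have hL : (w₁ ++ t₁.flatten)[w₁.length]'hlen = a := by
    rw [List.getElem_append_right (le_refl _)]
    simp only [Nat.sub_self]
    exact flatten_head (fun w hw => hb1 w (by simp [hw])) (by simp at hlen ⊢; omega)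
  have hR : (w₁ ++ t₁.flatten)[w₁.length]'hlen ≠ a := by
    rw [List.getElem_of_eq h1, List.getElem_append_left hlt]
    intro hcontra
    have := (hW2.2 _ hlt).mp hcontra
    omega
  exact hR hL

lemma flatten_blocks_inj {a : A} : ∀ (l₁ l₂ : List (List A)),
    (∀ w ∈ l₁, BlockP a w) → (∀ w ∈ l₂, BlockP a w) →
    l₁.length = l₂.length → l₁.flatten = l₂.flatten → l₁ = l₂ := by
  intro l₁
  induction l₁ with
  | nil =>
    intro l₂ _ _ hlen _
    cases l₂ with
    | nil => rfl
    | cons w t => simp at hlen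
  | cons w₁ t₁ ih =>
    intro l₂ hb1 hb2 hlen hfl
    cases l₂ with
    | nil => simp at hlen
    | cons w₂ t₂ =>
      have hwl : w₁.length = w₂.length := by
        have h1 := not_lt_head hb1 hb2 hfl
        have h2 := not_lt_head hb2 hb1 hfl.symm
        omega
      have h1 : w₁ ++ t₁.flatten = w₂ ++ t₂.flatten := by simpa using hfl
      obtain ⟨rfl, hfl2⟩ := List.append_inj h1 hwl
      have : t₁ = t₂ := ih t₂ (fun w hw => hb1 w (by simp [hw]))
        (fun w hw => hb2 w (by simp [hw])) (by simpa using hlen) hfl2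
      rw [this]

lemma flatten_pal {a : A} : ∀ (l : List (List A)),
    (∀ w ∈ l, IsPalindrome (w ++ [a])) →
    (l.flatten ++ [a]).reverse = l.reverse.flatten ++ [a] := by
  intro l
  induction l with
  | nil => simp
  | cons w t ih =>
    intro hb
    have hw : (w ++ [a]).reverse = w ++ [a] := hb w (by simp)
    have hrev : a :: w.reverse = w ++ [a] := by
      rw [← hw, List.reverse_append]
      simp
    calc ((w :: t).flatten ++ [a]).reverse
        = (w ++ (t.flatten ++ [a])).reverse := by simp
      _ = (t.flatten ++ [a]).reverse ++ w.reverse := by rw [List.reverse_append]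
      _ = (t.reverse.flatten ++ [a]) ++ w.reverse := by
            rw [ih (fun v hv => hb v (by simp [hv]))]
      _ = t.reverse.flatten ++ (a :: w.reverse) := by simp [List.append_assoc]
      _ = t.reverse.flatten ++ (w ++ [a]) := by rw [hrev]
      _ = (w :: t).reverse.flatten ++ [a] := by simp [List.append_assoc]

lemma code_iff {B : Type*} {r : ℕ → List B} {d : ℕ → ℕ}
    (hc : ∀ n, d n = (r '' {k | k < sInf {k | r k = r n}}).ncard) :
    ∀ n m, d n = d m ↔ r n = r m := by
  have key : ∀ n m, sInf {k | r k = r n} < sInf {k | r k = r m} → d n < d m := by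
    intro n m hlt
    have hiMem : sInf {k | r k = r n} ∈ {k | r k = r n} :=
      Nat.sInf_mem (⟨n, rfl⟩ : {k | r k = r n}.Nonempty)
    rw [hc n, hc m]
    apply Set.ncard_lt_ncard
    · constructor
      · rintro x ⟨k, hk, rfl⟩
        exact ⟨k, lt_trans hk hlt, rfl⟩
      · intro hsub
        obtain ⟨k, hk, hkr⟩ := hsub ⟨sInf {k | r k = r n}, hlt, hiMem⟩
        exact Nat.notMem_of_lt_sInf hk hkr
    · exact (Set.finite_Iio (sInf {k | r k = r m})).image r
  intro n m
  constructor
  · intro hdm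
    by_contra hne
    have hii : sInf {k | r k = r n} ≠ sInf {k | r k = r m} := by
      intro he
      have h1 : sInf {k | r k = r n} ∈ {k | r k = r n} :=
        Nat.sInf_mem (⟨n, rfl⟩ : {k | r k = r n}.Nonempty)
      have h2 : sInf {k | r k = r m} ∈ {k | r k = r m} :=
        Nat.sInf_mem (⟨m, rfl⟩ : {k | r k = r m}.Nonempty)
      simp only [Set.mem_setOf_eq] at h1 h2
      rw [he, h2] at h1
      exact hne h1.symm
    rcases lt_or_gt_of_ne hii with h | h
    · exact absurd hdm (key n m h).ne
    · exact absurd hdm.symm (key m n h).ne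
  · intro he
    rw [hc n, hc m, he]

/-- Partial sums of return word lengths. -/
def Sfun (r : ℕ → List A) (n : ℕ) : ℕ := ∑ i ∈ Finset.range n, (r i).length

/-- Concatenation of return words `r i, …, r (i+L-1)`. -/
def Wword (r : ℕ → List A) (i L : ℕ) : List A :=
  ((List.range L).map (fun t => r (i + t))).flatten

lemma occCount_single_self (a : A) : occCount [a] [a] = 1 := by
  rw [occCount]
  have h : {i : ℕ | i + ([a] : List A).length ≤ ([a] : List A).length ∧
      (([a] : List A).drop i).take ([a] : List A).length = [a]} = {0} := by
    ext i
    simp only [Set.mem_setOf_eq, List.length_singleton, Set.mem_singleton_iff]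
    constructor
    · rintro ⟨h1, -⟩; omega
    · rintro rfl; simp
  rw [h, Set.ncard_singleton]

/-- The context: `r` enumerates consecutive first returns to `[a]` in the rich word `y`. -/
structure Ctx (y : ℕ → A) (a : A) (r : ℕ → List A) : Prop where
  rich : RichWord y
  fr : ∀ n, FirstReturn [a] y (r n)
  occ : ∀ n, OccursAt (r n ++ [a]) y (Sfun r n)

namespace Ctx

variable {y : ℕ → A} {a : A} {r : ℕ → List A} (h : Ctx y a r)
include h

lemma rne (n : ℕ) : r n ≠ [] := by
  intro hnil
  have h2 := (h.fr n).2.2.2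
  rw [hnil, List.nil_append] at h2
  rw [occCount_single_self] at h2
  omega

lemma rpos (n : ℕ) : 0 < (r n).length := List.length_pos_iff.mpr (h.rne n)

lemma retElem (n : ℕ) : ∀ j (hj : j < (r n ++ [a]).length),
    ((r n ++ [a])[j] = a ↔ j = 0 ∨ j = (r n).length) := by
  have hw2 : 2 ≤ (r n ++ [a]).length := by
    have := h.rpos n; simp; omega
  have h0 : (r n ++ [a])[0]'(by omega) = a := by
    obtain ⟨t, ht⟩ := (h.fr n).2.2.1
    rw [List.getElem_of_eq ht.symm (by omega)]
    rw [List.getElem_append_left (by simp)]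
    rfl
  have hlen : (r n ++ [a]).length - 1 = (r n).length := by simp
  have hl : (r n ++ [a])[(r n ++ [a]).length - 1]'(by omega) = a := by
    simp only [hlen]
    rw [List.getElem_append_right (le_refl _)]
    simp
  have := two_occ hw2 h0 hl (h.fr n).2.2.2
  intro j hj
  rw [this j hj, hlen]

lemma blockP (n : ℕ) : BlockP a (r n) := by
  refine ⟨h.rne n, fun j hj => ?_⟩
  have h2 := h.retElem n j (by simp; omega)
  rw [List.getElem_append_left hj] at h2
  rw [h2]
  constructor
  · rintro (h3 | h3)
    · exact h3
    · omega
  · exact Or.inl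

lemma r0 (n : ℕ) : (r n)[0]'(h.rpos n) = a := ((h.blockP n).2 0 (h.rpos n)).mpr rfl

omit h

lemma Sfun_zero : Sfun r 0 = 0 := Finset.sum_range_zero _

lemma Sfun_succ (n : ℕ) : Sfun r (n + 1) = Sfun r n + (r n).length :=
  Finset.sum_range_succ _ n

include h

lemma S_mono : StrictMono (Sfun r) := by
  apply strictMono_nat_of_lt_succ
  intro n
  rw [Sfun_succ]
  have := h.rpos n
  omega

omit h

lemma Wword_zero (i : ℕ) : Wword r i 0 = [] := by simp [Wword]

lemma Wword_succ (i L : ℕ) : Wword r i (L + 1) = Wword r i L ++ r (i + L) := by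
  rw [Wword, List.range_succ, List.map_append, List.flatten_append]
  simp [Wword]

lemma Wword_split (i t k : ℕ) :
    Wword r i (t + k) = Wword r i t ++ Wword r (i + t) k := by
  rw [Wword, List.range_add, List.map_append, List.map_map, List.flatten_append]
  congr 1
  rw [Wword]
  congr 1
  apply List.map_congr_left
  intro x hx
  simp only [Function.comp_apply]
  congr 1
  omega

include h

lemma Wlen (i : ℕ) : ∀ L, Sfun r i + (Wword r i L).length = Sfun r (i + L) := by
  intro L
  induction L with
  | zero => simp [Wword_zero]
  | succ L ih =>
    rw [Wword_succ, List.length_append, ← add_assoc, ih, ← Sfun_succ]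
    rfl

lemma occW (i : ℕ) : ∀ L, OccursAt (Wword r i L ++ [a]) y (Sfun r i) := by
  intro L
  induction L with
  | zero =>
    rw [Wword_zero, List.nil_append]
    rw [occursAt_iff]
    intro k hk
    simp only [List.length_singleton] at hk
    interval_cases k
    have h2 := occursAt_iff.mp (h.occ i) 0 (by have := h.rpos i; simp)
    rw [List.getElem_append_left (h.rpos i)] at h2
    simpa [h.r0 i] using h2
  | succ L ih =>
    have hsplit : Wword r i (L + 1) ++ [a] = Wword r i L ++ (r (i + L) ++ [a]) := by
      rw [Wword_succ, List.append_assoc]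
    rw [hsplit]
    apply occursAt_append
    · exact occursAt_prefix ⟨[a], rfl⟩ ih
    · have := h.Wlen i L
      rw [show Sfun r i + (Wword r i L).length = Sfun r (i + L) from this]
      exact h.occ (i + L)

lemma exists_block (m : ℕ) : ∃ n, Sfun r n ≤ m ∧ m < Sfun r (n + 1) := by
  induction m with
  | zero =>
    refine ⟨0, by simp [Sfun_zero], ?_⟩
    have := h.S_mono (show 0 < 0 + 1 by omega)
    rw [Sfun_zero] at this
    omega
  | succ m ih =>
    obtain ⟨n, h1, h2⟩ := ih
    by_cases hc : m + 1 < Sfun r (n + 1)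
    · exact ⟨n, by omega, hc⟩
    · refine ⟨n + 1, by omega, ?_⟩
      have := h.S_mono (show n + 1 < n + 1 + 1 by omega)
      omega

lemma aPos (m : ℕ) : y m = a ↔ ∃ n, Sfun r n = m := by
  constructor
  · intro hm
    obtain ⟨n, h1, h2⟩ := h.exists_block m
    rw [Sfun_succ] at h2
    have hj : m - Sfun r n < (r n).length := by omega
    have h3 := occursAt_iff.mp (h.occ n) (m - Sfun r n) (by simp; omega)
    rw [show Sfun r n + (m - Sfun r n) = m by omega] at h3
    rw [List.getElem_append_left hj] at h3
    have h4 := ((h.blockP n).2 _ hj).mp (h3 ▸ hm)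
    exact ⟨n, by omega⟩
  · rintro ⟨n, rfl⟩
    have h2 := occursAt_iff.mp (h.occ n) 0 (by have := h.rpos n; simp)
    rw [List.getElem_append_left (h.rpos n)] at h2
    simpa [h.r0 n] using h2

lemma retPal (n : ℕ) : IsPalindrome (r n ++ [a]) := by
  set R := r n ++ [a] with hR
  have hRfact : IsFactor R y := (h.fr n).2.1
  have hRrich : RichList R := h.rich R hRfact
  have hrn : RichList (r n) :=
    h.rich (r n) (isFactor_of_infix ⟨[], [a], by simp [hR]⟩ hRfact)
  have hups : UPS R := by
    apply ups_of_rich (by simp [hR]) hRrich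
    rw [hR, List.dropLast_concat]
    exact hrn
  obtain ⟨P, hPpal, hPsuf, hPnin⟩ := hups
  rw [hR, List.dropLast_concat] at hPnin
  have hPne : P ≠ [] := by
    intro h'
    exact hPnin (h' ▸ List.nil_infix)
  have hRne : R ≠ [] := by simp [hR]
  have hPlast : P.getLast hPne = a := by
    rw [hPsuf.getLast hPne]
    exact List.getLast_append_singleton _
  have hP0 : P[0]'(List.length_pos_iff.mpr hPne) = a := by
    have h3 := pal_iff.mp hPpal 0 (List.length_pos_iff.mpr hPne)
    simp only [Nat.sub_zero] at h3
    rw [h3, ← List.getLast_eq_getElem hPne]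
    exact hPlast
  obtain ⟨q, hq⟩ := hPsuf
  have hqlen : q.length + P.length = (r n).length + 1 := by
    have := congrArg List.length hq
    simp only [List.length_append, List.length_singleton, hR] at this
    omega
  have hPpos := List.length_pos_iff.mpr hPne
  have hql : q.length < R.length := by
    simp only [hR, List.length_append, List.length_singleton]
    omega
  have hRq : R[q.length]'hql = a := by
    rw [List.getElem_of_eq hq.symm, List.getElem_append_right (le_refl _)]
    simpa using hP0
  have hcase := (h.retElem n q.length (by
      simp only [List.length_append, List.length_singleton]
      omega)).mp hRq
  rcases hcase with h1 | h1
  · have : q = [] := List.length_eq_zero_iff.mp h1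
    rw [this, List.nil_append] at hq
    rw [← hq]
    exact hPpal
  · exfalso
    have hP1 : P.length = 1 := by omega
    have hPa : P = [a] := by
      obtain ⟨b, rfl⟩ := List.length_eq_one_iff.mp hP1
      simpa using hP0
    apply hPnin
    rw [hPa]
    refine List.IsPrefix.isInfix ⟨(r n).drop 1, ?_⟩
    rw [List.singleton_append, ← h.r0 n, ← List.drop_eq_getElem_cons (h.rpos n),
      List.drop_zero]

lemma Whead {i L : ℕ} (hL : 1 ≤ L) :
    ∃ rest : List A, Wword r i L = a :: rest := by
  have hsplit : Wword r i L = r i ++ Wword r (i + 1) (L - 1) := by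
    have h1 : Wword r i 1 = r i := by
      rw [show (1 : ℕ) = 0 + 1 from rfl, Wword_succ, Wword_zero, List.nil_append,
        Nat.add_zero]
    rw [show L = 1 + (L - 1) by omega, Wword_split, h1]
    congr 2
    omega
  refine ⟨(r i).drop 1 ++ Wword r (i + 1) (L - 1), ?_⟩
  rw [hsplit, ← List.cons_append]
  congr 1
  rw [← h.r0 i, ← List.drop_eq_getElem_cons (h.rpos i), List.drop_zero]

set_option maxHeartbeats 1000000 in
lemma ups_factor {d : ℕ → ℕ} (hcode : ∀ n m, d n = d m ↔ r n = r m)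
    (v : List ℕ) (i : ℕ) (hvne : v ≠ []) (hocc : OccursAt v d i) : UPS v := by
  classical
  set L := v.length with hLdef
  have hL : 1 ≤ L := List.length_pos_iff.mpr hvne
  -- the corresponding factor of y
  set s : List A := Wword r i L ++ [a] with hsdef
  have hsocc : OccursAt s y (Sfun r i) := h.occW i L
  have hsfact : IsFactor s y := ⟨Sfun r i, hsocc⟩
  have hWlen : Sfun r i + (Wword r i L).length = Sfun r (i + L) := h.Wlen i L
  have hslen : s.length = (Wword r i L).length + 1 := by simp [hsdef]
  have hups : UPS s := by
    apply ups_of_rich (by simp [hsdef]) (h.rich s hsfact)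
    rw [hsdef, List.dropLast_concat]
    exact h.rich _ (isFactor_of_infix ⟨[], [a], by simp [hsdef]⟩ hsfact)
  obtain ⟨P, hPpal, hPsuf, hPnin⟩ := hups
  rw [hsdef, List.dropLast_concat] at hPnin
  have hPne : P ≠ [] := fun h' => hPnin (h' ▸ List.nil_infix)
  have hPpos : 0 < P.length := List.length_pos_iff.mpr hPne
  obtain ⟨q, hq⟩ := hPsuf
  have hqlen : q.length + P.length = s.length := by
    have := congrArg List.length hq
    simpa using this
  -- first letter of P is a
  have hPlast : P.getLast hPne = a := by
    rw [(show P <:+ s from ⟨q, hq⟩).getLast hPne]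
    exact List.getLast_append_singleton _
  have hP0 : P[0]'hPpos = a := by
    have h3 := pal_iff.mp hPpal 0 hPpos
    simp only [Nat.sub_zero] at h3
    rw [h3, ← List.getLast_eq_getElem hPne]
    exact hPlast
  -- hence q.length is a block boundary
  have hsq : s[q.length]'(by omega) = a := by
    rw [List.getElem_of_eq hq.symm, List.getElem_append_right (le_refl _)]
    simpa using hP0
  have hsa : ∀ m (hm : m < s.length), s[m]'hm = a → ∃ t ≤ L, Sfun r i + m = Sfun r (i + t) := by
    intro m hm hma
    have h1 : y (Sfun r i + m) = s[m]'hm := occursAt_iff.mp hsocc m hm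
    rw [hma] at h1
    obtain ⟨n, hn⟩ := (h.aPos _).mp h1
    have hni : i ≤ n := by
      by_contra hc
      have := h.S_mono (show n < i by omega)
      omega
    have hnL : n ≤ i + L := by
      by_contra hc
      have := h.S_mono (show i + L < n by omega)
      omega
    exact ⟨n - i, by omega, by rw [show i + (n - i) = n by omega]; omega⟩
  obtain ⟨t0, ht0L, ht0⟩ := hsa q.length (by omega) hsq
  -- t0 < L
  have ht0lt : t0 < L := by
    rcases lt_or_eq_of_le ht0L with hlt | heq
    · exact hlt
    · exfalso
      have hPl1 : P.length = 1 := by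
        rw [heq] at ht0
        omega
      have hPa : P = [a] := by
        obtain ⟨b, rfl⟩ := List.length_eq_one_iff.mp hPl1
        simpa using hP0
      apply hPnin
      rw [hPa]
      obtain ⟨rest, hrest⟩ := h.Whead (i := i) hL
      exact List.IsPrefix.isInfix ⟨rest, by rw [hrest]; rfl⟩
  set m := L - t0 with hmdef
  have hm1 : 1 ≤ m := by omega
  -- identify P with the suffix block word
  have hsplit : Wword r i L = Wword r i t0 ++ Wword r (i + t0) m := by
    rw [← Wword_split]
    congr 1
    omega
  set Q : List A := Wword r (i + t0) m ++ [a] with hQdef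
  have hQsuf : Q <:+ s := by
    refine ⟨Wword r i t0, ?_⟩
    rw [hQdef, hsdef, hsplit, List.append_assoc]
  have hWm : Sfun r (i + t0) + (Wword r (i + t0) m).length = Sfun r (i + L) := by
    have := h.Wlen (i + t0) m
    rwa [show i + t0 + m = i + L by omega] at this
  have hQlen : Q.length = P.length := by
    have h1 : Q.length = (Wword r (i + t0) m).length + 1 := by simp [hQdef]
    omega
  have hPQ : P = Q :=
    (suffix_of_suffix_le ⟨q, hq⟩ hQsuf (by omega)).eq_of_length (by omega)
  -- the list of blocks
  set l : List (List A) := (List.range m).map (fun j => r (i + t0 + j)) with hldef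
  have hlW : l.flatten = Wword r (i + t0) m := rfl
  have hllen : l.length = m := by simp [hldef]
  have hlget : ∀ j (hj : j < m), l[j]'(by omega) = r (i + t0 + j) := by
    intro j hj
    simp [hldef]
  have hlblocks : ∀ w ∈ l, BlockP a w := by
    intro w hw
    rw [hldef] at hw
    obtain ⟨j, hj, rfl⟩ := List.mem_map.mp hw
    exact h.blockP _
  -- palindromicity of the blocks list
  have hlrev : l.reverse = l := by
    have h1 : (l.flatten ++ [a]).reverse = l.reverse.flatten ++ [a] := by
      apply flatten_pal
      intro w hw
      rw [hldef] at hw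
      obtain ⟨j, hj, rfl⟩ := List.mem_map.mp hw
      exact h.retPal _
    have h2 : (l.flatten ++ [a]).reverse = l.flatten ++ [a] := by
      rw [hlW, ← hQdef, ← hPQ]
      exact hPpal
    rw [h2] at h1
    exact flatten_blocks_inj _ _ (by
      intro w hw
      exact hlblocks w (List.mem_reverse.mp hw)) hlblocks (by simp)
      (List.append_cancel_right h1.symm)
  -- the candidate palindromic suffix of v
  set v' : List ℕ := (List.range m).map (fun j => d (i + t0 + j)) with hv'def
  have hv'len : v'.length = m := by simp [hv'def]
  have hv'get : ∀ j (hj : j < m), v'[j]'(by omega) = d (i + t0 + j) := by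
    intro j hj
    simp [hv'def]
  have hvmap : (List.range L).map (fun k => d (i + k)) = v := hocc
  have hv'suf : v' <:+ v := by
    refine ⟨(List.range t0).map (fun k => d (i + k)), ?_⟩
    rw [← hvmap, show L = t0 + m by omega, List.range_add, List.map_append,
      List.map_map]
    congr 1
    rw [hv'def]
    apply List.map_congr_left
    intro x hx
    simp only [Function.comp_apply]
    congr 1
    omega
  have hv'pal : IsPalindrome v' := by
    rw [pal_iff]
    intro j hj
    rw [hv'len] at hj
    have hj' : m - 1 - j < m := by omega
    rw [hv'get j hj]
    rw [getElem_idx (show v'.length - 1 - j = m - 1 - j by omega)]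
    rw [hv'get _ hj']
    rw [hcode]
    have h1 : l.reverse[j]'(by simp; omega) = l[j]'(by omega) := by
      rw [List.getElem_of_eq hlrev]
    rw [List.getElem_reverse] at h1
    rw [hlget j hj] at h1
    have h2 : l[l.length - 1 - j]'(by omega) = r (i + t0 + (m - 1 - j)) := by
      rw [getElem_idx (show l.length - 1 - j = m - 1 - j by omega)]
      exact hlget _ hj'
    rw [h2] at h1
    exact h1.symm
  -- v' occurs in v only as a suffix
  have hv'nin : ¬ v' <:+: v.dropLast := by
    intro hinf
    obtain ⟨s₁, t₁, hst⟩ := hinf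
    have hvdl : v.dropLast = (List.range (L - 1)).map (fun k => d (i + k)) := by
      conv_lhs => rw [← hvmap, show L = (L - 1) + 1 by omega]
      exact dropLast_map_range _ _
    rw [hvdl] at hst
    have hlen1 : s₁.length + m + t₁.length = L - 1 := by
      have := congrArg List.length hst
      simp [hv'len] at this
      omega
    set t1 := s₁.length with ht1def
    have hmatch : ∀ j, j < m → d (i + t1 + j) = d (i + t0 + j) := by
      intro j hj
      have hb2 : t1 + j < (s₁ ++ v' ++ t₁).length := by
        simp only [List.length_append, hv'len]
        omega
      have h2 : (s₁ ++ v' ++ t₁)[t1 + j]'hb2 = v'[j]'(by omega) := by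
        rw [List.getElem_append_left (show t1 + j < (s₁ ++ v').length by
          simp only [List.length_append, hv'len]; omega)]
        rw [List.getElem_append_right (by omega)]
        exact getElem_idx (by omega) _
      have h4 : ((List.range (L - 1)).map (fun k => d (i + k)))[t1 + j]'(by
          rw [← hst]; exact hb2) = d (i + (t1 + j)) := by
        rw [List.getElem_map]
        congr 1
        rw [List.getElem_range]
      have h5 := (List.getElem_of_eq hst hb2).symm.trans h2
      rw [h4, hv'get j hj] at h5
      rw [← h5]
      congr 1
      omega
    have hrmatch : ∀ j, j < m → r (i + t1 + j) = r (i + t0 + j) := by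
      intro j hj
      exact (hcode _ _).mp (hmatch j hj)
    have hWeq : Wword r (i + t1) m = Wword r (i + t0) m := by
      rw [Wword, Wword]
      congr 1
      apply List.map_congr_left
      intro x hx
      rw [List.mem_range] at hx
      exact hrmatch x hx
    -- P occurs inside s.dropLast
    apply hPnin
    have hLsplit : Wword r i L
        = Wword r i t1 ++ (Wword r (i + t1) m ++ Wword r (i + t1 + m) (L - t1 - m)) := by
      rw [show L = t1 + (m + (L - t1 - m)) by omega, Wword_split, Wword_split]
      congr 3
      omega
    obtain ⟨rest, hrest⟩ := h.Whead (i := i + t1 + m) (L := L - t1 - m) (by omega)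
    refine ⟨Wword r i t1, rest, ?_⟩
    rw [hPQ, hQdef, ← hWeq, hLsplit, hrest]
    simp [List.append_assoc]
  exact ⟨v', hv'pal, hv'suf, hv'nin⟩

end Ctx

end DerivedAux

/-- The derived word of a rich uniformly recurrent word `y` at the prefix
consisting of its first letter is rich and begins in the letter `0` of the derived
alphabet. -/
theorem derivedWord_of_rich_is_rich {A : Type*} [Fintype A] (y : ℕ → A)
    (hr : RichWord y) (hur : UniformlyRecurrent y) (d : ℕ → ℕ)
    (hd : IsDerivedWord y [y 0] d) :
    RichWord d ∧ d 0 = 0 := by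
  obtain ⟨r, hFR, hOcc, hcode3⟩ := hd
  have hctx : DerivedAux.Ctx y (y 0) r := ⟨hr, hFR, hOcc⟩
  have hcode := DerivedAux.code_iff hcode3
  constructor
  · intro u hu
    obtain ⟨i, hi⟩ := hu
    apply DerivedAux.rich_of_prefixes_ups
    intro p hpne hppre
    exact hctx.ups_factor hcode p i hpne (DerivedAux.occursAt_prefix hppre hi)
  · have h0 : sInf {k | r k = r 0} = 0 := Nat.sInf_eq_zero.mpr (Or.inl rfl)
    rw [hcode3 0, h0]
    have he : {k : ℕ | k < 0} = ∅ := by ext k; simp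
    rw [he]
    simp
end

section
/- Let y be a primitive morphic infinite word beginning in the letter 0. Then the derived word D_0(y) of y at the prefix 0 is primitive morphic. -/
open List

namespace DW

variable {A B C X : Type*}

/-- The factor `z_s z_{s+1} ⋯ z_{t-1}` of an infinite word. -/
def chunk (z : ℕ → B) (s t : ℕ) : List B := (List.range (t - s)).map (fun i => z (s + i))

@[simp] lemma length_chunk (z : ℕ → B) (s t : ℕ) : (chunk z s t).length = t - s := by
  simp [chunk]

lemma chunk_of_le (z : ℕ → B) {s t : ℕ} (h : t ≤ s) : chunk z s t = [] := by
  simp [chunk, Nat.sub_eq_zero_of_le h]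

lemma getElem_chunk (z : ℕ → B) (s t i : ℕ) (h : i < t - s) :
    (chunk z s t)[i]'(by simpa using h) = z (s + i) := by
  simp [chunk]

lemma chunk_succ (z : ℕ → B) {s t : ℕ} (h : s ≤ t) :
    chunk z s (t + 1) = chunk z s t ++ [z t] := by
  have ht : t + 1 - s = (t - s) + 1 := by omega
  rw [chunk, ht, List.range_succ, List.map_append]
  simp only [chunk, List.map_cons, List.map_nil]
  have hst : s + (t - s) = t := by omega
  rw [hst]

lemma chunk_singleton (z : ℕ → B) (s : ℕ) : chunk z s (s + 1) = [z s] := by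
  have := chunk_succ z (le_refl s)
  simpa [chunk_of_le z (le_refl s)] using this

lemma chunk_append (z : ℕ → B) {s t u : ℕ} (h1 : s ≤ t) (h2 : t ≤ u) :
    chunk z s t ++ chunk z t u = chunk z s u := by
  have h3 : u - s = (t - s) + (u - t) := by omega
  rw [chunk, chunk, chunk, h3, List.range_add, List.map_append, List.map_map]
  congr 1
  apply List.map_congr_left
  intro i hi
  simp only [Function.comp_apply]
  congr 1
  omega

lemma chunk_eq_of_forall {z w : ℕ → B} {s t s' t' : ℕ} (hlen : t - s = t' - s')
    (h : ∀ i, i < t - s → z (s + i) = w (s' + i)) : chunk z s t = chunk w s' t' := by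
  rw [chunk, chunk, ← hlen]
  apply List.map_congr_left
  intro i hi
  exact h i (by simpa using hi)

lemma forall_of_chunk_eq {z w : ℕ → B} {s t s' t' : ℕ} (h : chunk z s t = chunk w s' t') :
    ∀ i, i < t - s → z (s + i) = w (s' + i) := by
  intro i hi
  have hl : t - s = t' - s' := by
    have := congrArg List.length h; simpa using this
  have hi' : i < t' - s' := hl ▸ hi
  calc z (s + i) = (chunk z s t)[i]'(by simpa using hi) := (getElem_chunk z s t i hi).symm
    _ = (chunk w s' t')[i]'(by simpa using hi') := List.getElem_of_eq h _
    _ = w (s' + i) := getElem_chunk w s' t' i hi'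

lemma chunk_eq_list {z : ℕ → B} {s t : ℕ} {w : List B} (h : chunk z s t = w)
    {i : ℕ} (hi : i < t - s) : z (s + i) = w[i]'(by rw [← h]; simpa using hi) := by
  calc z (s + i) = (chunk z s t)[i]'(by simpa using hi) := (getElem_chunk z s t i hi).symm
    _ = _ := List.getElem_of_eq h _

lemma wordTake_eq_chunk (z : ℕ → B) (n : ℕ) : wordTake z n = chunk z 0 n := by
  simp [wordTake, chunk]

lemma occursAt_iff_chunk (u : List B) (x : ℕ → B) (i : ℕ) :
    OccursAt u x i ↔ chunk x i (i + u.length) = u := by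
  simp [OccursAt, chunk]

lemma mem_chunk_of (h : ℕ → C) {s t i : ℕ} (hi : i < t - s) {c : C} (hc : h (s + i) = c) :
    c ∈ chunk h s t := by
  rw [chunk]
  exact List.mem_map.mpr ⟨i, List.mem_range.mpr hi, hc⟩

lemma exists_of_mem_chunk {h : ℕ → C} {s t : ℕ} {c : C} (hc : c ∈ chunk h s t) :
    ∃ i, i < t - s ∧ h (s + i) = c := by
  rw [chunk] at hc
  obtain ⟨i, hi, hic⟩ := List.mem_map.mp hc
  exact ⟨i, List.mem_range.mp hi, hic⟩

/-! listApply basics -/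

@[simp] lemma listApply_nil (f : A → List B) : listApply f [] = [] := rfl

@[simp] lemma listApply_cons (f : A → List B) (a : A) (w : List A) :
    listApply f (a :: w) = f a ++ listApply f w := by simp [listApply]

@[simp] lemma listApply_append (f : A → List B) (w v : List A) :
    listApply f (w ++ v) = listApply f w ++ listApply f v := by simp [listApply]

@[simp] lemma listApply_singleton (f : A → List B) (a : A) : listApply f [a] = f a := by
  simp [listApply]

lemma length_le_listApply {f : A → List B} (hf : NonErasing f) (w : List A) :
    w.length ≤ (listApply f w).length := by
  induction w with
  | nil => simp
  | cons a w ih =>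
      have : 1 ≤ (f a).length := List.length_pos_iff.mpr (hf a)
      simp only [listApply_cons, List.length_append, List.length_cons]
      omega

lemma two_mul_length_le_listApply {f : A → List B} (hf : ∀ a, 2 ≤ (f a).length) (w : List A) :
    2 * w.length ≤ (listApply f w).length := by
  induction w with
  | nil => simp
  | cons a w ih =>
      have := hf a
      simp only [listApply_cons, List.length_append, List.length_cons]
      omega

lemma listApply_iterate_nil (F : A → List A) (M : ℕ) :
    (listApply F)^[M] ([] : List A) = [] := by
  induction M with
  | zero => rfl
  | succ M ih => rw [Function.iterate_succ_apply, listApply_nil, ih]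

lemma listApply_iterate_append (F : A → List A) (M : ℕ) (w v : List A) :
    (listApply F)^[M] (w ++ v) = (listApply F)^[M] w ++ (listApply F)^[M] v := by
  induction M generalizing w v with
  | zero => rfl
  | succ M ih => rw [Function.iterate_succ_apply, listApply_append, ih,
      Function.iterate_succ_apply, Function.iterate_succ_apply]

lemma listApply_iterate_pow (F : A → List A) (M : ℕ) (w : List A) :
    listApply (fun a => (listApply F)^[M] [a]) w = (listApply F)^[M] w := by
  induction w with
  | nil => rw [listApply_nil, listApply_iterate_nil]
  | cons a w ih =>
      rw [listApply_cons, ih]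
      have : (a :: w) = [a] ++ w := rfl
      rw [this, listApply_iterate_append]


/-! ### Morphic images -/

/-- Length of the image of the prefix of length `k`. -/
def Lf (f : A → List B) (x : ℕ → A) (k : ℕ) : ℕ := (listApply f (chunk x 0 k)).length

lemma Lf_zero (f : A → List B) (x : ℕ → A) : Lf f x 0 = 0 := by
  simp [Lf, chunk_of_le x (le_refl 0)]

lemma Lf_succ (f : A → List B) (x : ℕ → A) (k : ℕ) :
    Lf f x (k + 1) = Lf f x k + (f (x k)).length := by
  rw [Lf, chunk_succ x (Nat.zero_le k), listApply_append, List.length_append, listApply_singleton]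
  rfl

lemma Lf_mono (f : A → List B) (x : ℕ → A) : Monotone (Lf f x) :=
  monotone_nat_of_le_succ fun k => by rw [Lf_succ]; omega

lemma Lf_strictMono {f : A → List B} (hf : NonErasing f) (x : ℕ → A) : StrictMono (Lf f x) :=
  strictMono_nat_of_lt_succ fun k => by
    have : 1 ≤ (f (x k)).length := List.length_pos_iff.mpr (hf (x k))
    rw [Lf_succ]; omega

section MorphImage

variable {f : A → List B} {x : ℕ → A} {y : ℕ → B}

lemma morph_prefix (H : IsMorphicImage f x y) (k : ℕ) : listApply f (chunk x 0 k) = chunk y 0 (Lf f x k) := by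
  obtain ⟨n, hn⟩ := H k
  rw [wordTake_eq_chunk, wordTake_eq_chunk] at hn
  have hlen : n = Lf f x k := by
    rw [Lf, hn, length_chunk]; omega
  rw [hn, hlen]

lemma morph_chunk (H : IsMorphicImage f x y) {s t : ℕ} (h : s ≤ t) :
    listApply f (chunk x s t) = chunk y (Lf f x s) (Lf f x t) := by
  have h1 := morph_prefix H s
  have h2 := morph_prefix H t
  have hsplit : chunk x 0 s ++ chunk x s t = chunk x 0 t :=
    chunk_append x (Nat.zero_le s) h
  have hm : Lf f x s ≤ Lf f x t := Lf_mono f x h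
  have hy : chunk y 0 (Lf f x s) ++ chunk y (Lf f x s) (Lf f x t) = chunk y 0 (Lf f x t) :=
    chunk_append y (Nat.zero_le _) hm
  have hmain : chunk y 0 (Lf f x s) ++ listApply f (chunk x s t)
      = chunk y 0 (Lf f x s) ++ chunk y (Lf f x s) (Lf f x t) := by
    rw [hy, ← h2, ← hsplit, listApply_append, h1]
  exact List.append_cancel_left hmain

lemma morph_letter (H : IsMorphicImage f x y) (k : ℕ) (hk : 0 < (f (x k)).length) :
    y (Lf f x k) = (f (x k))[0]'hk := by
  have h1 : listApply f (chunk x k (k + 1)) = chunk y (Lf f x k) (Lf f x (k + 1)) :=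
    morph_chunk H (Nat.le_succ k)
  rw [chunk_singleton, listApply_singleton] at h1
  have := chunk_eq_list h1.symm (i := 0) (by rw [Lf_succ]; omega)
  simpa using this

end MorphImage

/-! ### Enumeration of the occurrences of the first letter -/

/-- The `n`-th return word (gap word between consecutive occurrences). -/
def gword (z : ℕ → B) (P : ℕ → ℕ) (n : ℕ) : List B := chunk z (P n) (P (n + 1))

structure Enum (z : ℕ → B) (P : ℕ → ℕ) : Prop where
  zero : P 0 = 0
  mono : StrictMono P
  mem : ∀ n, z (P n) = z 0
  not_between : ∀ n m, P n < m → m < P (n + 1) → z m ≠ z 0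
  complete : ∀ m, z m = z 0 → ∃ n, P n = m

namespace Enum

variable {z : ℕ → B} {P : ℕ → ℕ}

/-- Construct an enumeration, deriving completeness from "no occurrence in between". -/
lemma of_not_between (zero : P 0 = 0) (mono : StrictMono P) (mem : ∀ n, z (P n) = z 0)
    (nb : ∀ n m, P n < m → m < P (n + 1) → z m ≠ z 0) : Enum z P := by
  refine ⟨zero, mono, mem, nb, ?_⟩
  intro m hm
  classical
  let Q : ℕ → Prop := fun k => P k ≤ m
  have h0 : Q 0 := by show P 0 ≤ m; omega
  have hPn' : Q (Nat.findGreatest Q m) := Nat.findGreatest_spec (Nat.zero_le m) h0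
  set n := Nat.findGreatest Q m with hn
  have hPn : P n ≤ m := hPn'
  have hlt : m < P (n + 1) := by
    by_contra hcon
    push_neg at hcon
    have hb : n + 1 ≤ m := le_trans mono.le_apply hcon
    have h2 : n + 1 ≤ Nat.findGreatest Q m := Nat.le_findGreatest hb hcon
    omega
  rcases eq_or_lt_of_le hPn with he | hlt'
  · exact ⟨n, he⟩
  · exact absurd hm (nb n m hlt' hlt)

/-- Construct an enumeration, deriving "no occurrence in between" from completeness. -/
lemma of_complete (zero : P 0 = 0) (mono : StrictMono P) (mem : ∀ n, z (P n) = z 0)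
    (complete : ∀ m, z m = z 0 → ∃ n, P n = m) : Enum z P := by
  refine ⟨zero, mono, mem, ?_, complete⟩
  intro n m h1 h2 hm
  obtain ⟨k, hk⟩ := complete m hm
  subst hk
  have hk1 : n < k := mono.lt_iff_lt.mp h1
  have hk2 : k < n + 1 := mono.lt_iff_lt.mp h2
  omega

lemma next_le (hE : Enum z P) {n q : ℕ} (h1 : P n < q) (h2 : z q = z 0) : P (n + 1) ≤ q := by
  obtain ⟨k, hk⟩ := hE.complete q h2
  subst hk
  have : n < k := hE.mono.lt_iff_lt.mp h1
  exact hE.mono.monotone (by omega)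

lemma gword_length_pos (hE : Enum z P) (n : ℕ) : 0 < (gword z P n).length := by
  rw [gword, length_chunk]
  have := hE.mono (show n < n + 1 by omega)
  omega

/-- The key transport lemma: if two windows of `z`, both aligned on occurrences of the
letter `z 0` at both ends, carry equal words, then they decompose into the same number of
return words with equal offsets. -/
lemma transport (hE : Enum z P) {a a' b b' : ℕ} (ha : a ≤ a') (hb : b ≤ b')
    (hlen : P a' - P a = P b' - P b)
    (hw : ∀ i, i ≤ P a' - P a → z (P a + i) = z (P b + i)) :
    a' - a = b' - b ∧ ∀ i, a + i ≤ a' → P (a + i) - P a = P (b + i) - P b := by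
  have hPaa : P a ≤ P a' := hE.mono.monotone ha
  have hPbb : P b ≤ P b' := hE.mono.monotone hb
  set ℓ := P a' - P a with hℓ
  have key : ∀ i, a + i ≤ a' → b + i ≤ b' ∧ P (a + i) - P a = P (b + i) - P b := by
    intro i
    induction i with
    | zero => exact fun _ => ⟨hb, by simp⟩
    | succ i ih =>
        intro hia
        rw [show a + (i + 1) = a + i + 1 by omega] at hia ⊢
        rw [show b + (i + 1) = b + i + 1 by omega]
        have hia' : a + i ≤ a' := by omega
        obtain ⟨hib, hoff⟩ := ih hia'
        have hPa_le : P a ≤ P (a + i) := hE.mono.monotone (by omega)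
        have hPb_le : P b ≤ P (b + i) := hE.mono.monotone (by omega)
        have hPa'_le : P (a + i + 1) ≤ P a' := hE.mono.monotone (by omega)
        have hPlt : P (a + i) < P (a + i + 1) := hE.mono (by omega)
        set o := P (a + i) - P a with ho
        set o' := P (a + i + 1) - P a with ho'
        have hoo' : o < o' := by omega
        have ho'ℓ : o' ≤ ℓ := by omega
        have hz1 : z (P b + o') = z 0 := by
          rw [← hw o' ho'ℓ]
          have he : P a + o' = P (a + i + 1) := by omega
          rw [he]; exact hE.mem _
        have hPbi : P (b + i) = P b + o := by omega
        have hnext : P (b + i + 1) ≤ P b + o' := hE.next_le (by omega) hz1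
        have hlt2 : P (b + i) < P (b + i + 1) := hE.mono (by omega)
        have heq : P (b + i + 1) = P b + o' := by
          by_contra hne
          have hlt3 : P (b + i + 1) < P b + o' := by omega
          set o'' := P (b + i + 1) - P b with ho''
          have h1 : o < o'' := by omega
          have h2 : o'' < o' := by omega
          have hz3 : z (P a + o'') = z 0 := by
            rw [hw o'' (by omega)]
            have he : P b + o'' = P (b + i + 1) := by omega
            rw [he]; exact hE.mem _
          exact hE.not_between (a + i) (P a + o'') (by omega) (by omega) hz3
        have hble : b + i + 1 ≤ b' := by
          have : P (b + i + 1) ≤ P b' := by omega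
          exact hE.mono.le_iff_le.mp this
        exact ⟨hble, by omega⟩
  constructor
  · obtain ⟨h1, h2⟩ := key (a' - a) (by omega)
    have he1 : P (a + (a' - a)) = P a' := by
      congr 1; omega
    have he2 : P (b + (a' - a)) = P b' := by
      have : P (b + (a' - a)) - P b = P b' - P b := by omega
      have hle : P (b + (a' - a)) ≤ P b' := hE.mono.monotone h1
      have hge : P b ≤ P (b + (a' - a)) := hE.mono.monotone (by omega)
      omega
    have := hE.mono.injective he2
    omega
  · exact fun i hi => (key i hi).2

/-- Transport of the return words along equal windows. -/
lemma transport_gw (hE : Enum z P) {a a' b b' : ℕ} (ha : a ≤ a') (hb : b ≤ b')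
    (hlen : P a' - P a = P b' - P b)
    (hw : ∀ i, i ≤ P a' - P a → z (P a + i) = z (P b + i)) :
    a' - a = b' - b ∧ ∀ i, a + i < a' → gword z P (a + i) = gword z P (b + i) := by
  obtain ⟨hcount, hoff⟩ := hE.transport ha hb hlen hw
  have hcount' := hcount
  refine ⟨hcount, ?_⟩
  intro i hi
  have h1 := hoff i (by omega)
  have h2 := hoff (i + 1) (by omega)
  have e1 : a + (i + 1) = a + i + 1 := by omega
  have e2 : b + (i + 1) = b + i + 1 := by omega
  rw [e1, e2] at h2
  have hPa_le : P a ≤ P (a + i) := hE.mono.monotone (by omega)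
  have hPb_le : P b ≤ P (b + i) := hE.mono.monotone (by omega)
  have hPlt : P (a + i) < P (a + i + 1) := hE.mono (by omega)
  have hPlt' : P (b + i) < P (b + i + 1) := hE.mono (by omega)
  have hPa'_le : P (a + i + 1) ≤ P a' := hE.mono.monotone (by omega)
  rw [gword, gword]
  apply chunk_eq_of_forall
  · omega
  · intro j hj
    have hwj := hw ((P (a + i) - P a) + j) (by omega)
    have ea : P a + ((P (a + i) - P a) + j) = P (a + i) + j := by omega
    have eb : P b + ((P (a + i) - P a) + j) = P (b + i) + j := by omega
    rw [ea, eb] at hwj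
    exact hwj

/-- If the complete return word `gword j ++ [z 0]` occurs at position `t`, then `t` is an
occurrence position `P a` and the return word there equals `gword j`. -/
lemma occurrence (hE : Enum z P) {j t : ℕ}
    (hw : ∀ i, i ≤ P (j + 1) - P j → z (t + i) = z (P j + i)) :
    ∃ a, P a = t ∧ P (a + 1) = t + (P (j + 1) - P j) ∧ gword z P a = gword z P j := by
  set g := P (j + 1) - P j with hg
  have hPj : P j < P (j + 1) := hE.mono (by omega)
  have hzt : z t = z 0 := by
    have h0 := hw 0 (by omega)
    simpa using h0.trans (hE.mem j)
  obtain ⟨a, ha⟩ := hE.complete t hzt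
  have hz2 : z (t + g) = z 0 := by
    rw [hw g (le_refl g)]
    have he : P j + g = P (j + 1) := by omega
    rw [he]; exact hE.mem _
  have hnext : P (a + 1) ≤ t + g := hE.next_le (by omega) hz2
  have hlt1 : P a < P (a + 1) := hE.mono (by omega)
  have heq : P (a + 1) = t + g := by
    by_contra hne
    have hlt : P (a + 1) < t + g := by omega
    set o := P (a + 1) - t with ho
    have hzo : z (P j + o) = z 0 := by
      rw [← hw o (by omega)]
      have he : t + o = P (a + 1) := by omega
      rw [he]; exact hE.mem _
    exact hE.not_between j (P j + o) (by omega) (by omega) hzo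
  refine ⟨a, ha, heq, ?_⟩
  rw [gword, gword]
  apply chunk_eq_of_forall
  · omega
  · intro i hi
    rw [ha]
    exact hw i (by omega)

end Enum

/-- Assembling block images along a factorization. -/
lemma assembly {CC XX : Type*} {E : ℕ → CC} {Bk : CC → List XX} {h : ℕ → XX} {idx : ℕ → ℕ}
    (hblock : ∀ n, Bk (E n) = chunk h (idx n) (idx (n + 1)))
    (hmono : Monotone idx) :
    ∀ s t, s ≤ t → listApply Bk (chunk E s t) = chunk h (idx s) (idx t) := by
  intro s t hst
  induction t, hst using Nat.le_induction with
  | base => rw [chunk_of_le E (le_refl s), chunk_of_le h (le_refl (idx s)), listApply_nil]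
  | succ t hst ih =>
      rw [chunk_succ E hst, listApply_append, ih, listApply_singleton, hblock t,
        chunk_append h (hmono hst) (hmono (Nat.le_succ t))]

end DW

namespace DW2
open DW

variable {A B : Type*}

lemma infinite_of_unbounded {s : Set ℕ} (h : ∀ t, ∃ q, t < q ∧ q ∈ s) : s.Infinite := by
  by_contra hfin
  rw [Set.not_infinite] at hfin
  obtain ⟨C, hC⟩ := hfin.bddAbove
  obtain ⟨q, hq1, hq2⟩ := h C
  exact absurd (hC hq2) (by omega)

lemma enum_nth {z : ℕ → B} (hinf : {m | z m = z 0}.Infinite) : ∃ P, Enum z P := by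
  classical
  refine ⟨Nat.nth (fun m => z m = z 0), Enum.of_complete ?_ ?_ ?_ ?_⟩
  · rw [Nat.nth_zero]
    apply Nat.sInf_eq_zero.mpr
    left; exact rfl
  · exact Nat.nth_strictMono hinf
  · exact fun n => Nat.nth_mem_of_infinite hinf n
  · intro m hm
    exact ⟨Nat.count (fun m => z m = z 0) m, Nat.nth_count hm⟩

lemma occ_single {b : B} {v : List B} (hp : ([b] : List B) <+: v ++ [b])
    (h2 : occCount [b] (v ++ [b]) = 2) :
    0 < v.length ∧ ∀ i (hi : i ≤ v.length),
      ((v ++ [b])[i]'(by simpa using Nat.lt_succ_of_le hi) = b ↔ (i = 0 ∨ i = v.length)) := by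
  classical
  have hwlen : (v ++ [b]).length = v.length + 1 := by simp
  set Sset : Set ℕ :=
    {i | i + 1 ≤ (v ++ [b]).length ∧ ((v ++ [b]).drop i).take 1 = [b]} with hSset
  have h2' : Sset.ncard = 2 := by
    have : occCount [b] (v ++ [b]) = Sset.ncard := by
      rw [occCount, hSset]
      norm_num
    omega
  have hchar : ∀ i (hi : i ≤ v.length),
      (i ∈ Sset ↔ (v ++ [b])[i]'(by simpa using Nat.lt_succ_of_le hi) = b) := by
    intro i hi
    rw [hSset]
    simp only [Set.mem_setOf_eq]
    rw [List.drop_eq_getElem_cons (show i < (v ++ [b]).length by omega)]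
    simp only [List.take_succ_cons, List.take_zero, List.cons.injEq, and_true]
    constructor
    · exact fun h => h.2
    · exact fun h => ⟨by omega, h⟩
  have h0mem : 0 ∈ Sset := by
    rw [hchar 0 (by omega)]
    obtain ⟨t, ht⟩ := hp
    have h00 := List.getElem_of_eq ht.symm (show (0:ℕ) < (v ++ [b]).length by omega)
    rw [h00]
    simp
  have hvne : v ≠ [] := by
    intro hv
    subst hv
    have hsub : Sset ⊆ {0} := by
      intro i hi
      rw [hSset] at hi
      simp only [Set.mem_setOf_eq] at hi
      have : i = 0 := by simpa using hi.1
      simp [this]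
    have := Set.ncard_le_ncard hsub (Set.finite_singleton 0)
    rw [Set.ncard_singleton] at this
    omega
  have hLpos : 0 < v.length := List.length_pos_iff.mpr hvne
  have hLmem : v.length ∈ Sset := by
    rw [hchar v.length (le_refl _)]
    exact List.getElem_concat_length rfl _
  have hfin : Sset.Finite := by
    apply (Set.finite_Iio (v.length + 2)).subset
    intro i hi
    rw [hSset] at hi
    simp only [Set.mem_setOf_eq] at hi
    simp only [Set.mem_Iio]
    omega
  have hpair : ({0, v.length} : Set ℕ) ⊆ Sset := by
    intro i hi
    rcases hi with hi | hi
    · simpa [hi] using h0mem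
    · simp only [Set.mem_singleton_iff] at hi
      rw [hi]; exact hLmem
  have heq : ({0, v.length} : Set ℕ) = Sset := by
    apply Set.eq_of_subset_of_ncard_le hpair _ hfin
    rw [h2', Set.ncard_pair (show (0:ℕ) ≠ v.length by omega)]
  refine ⟨hLpos, ?_⟩
  intro i hi
  rw [← hchar i hi, ← heq]
  simp only [Set.mem_insert_iff, Set.mem_singleton_iff]

lemma length_le_iterate {τ : A → List A} (h : NonErasing τ) (M : ℕ) (w : List A) :
    w.length ≤ ((listApply τ)^[M] w).length := by
  induction M generalizing w with
  | zero => exact le_refl _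
  | succ M ih =>
      rw [Function.iterate_succ_apply]
      exact le_trans (length_le_listApply h w) (ih _)

lemma morph_iterate {τ : A → List A} {x : ℕ → A} (H : IsMorphicImage τ x x) (M : ℕ) :
    ∀ k, ∃ n, (listApply τ)^[M] (chunk x 0 k) = chunk x 0 n := by
  induction M with
  | zero => exact fun k => ⟨k, rfl⟩
  | succ M ih =>
      intro k
      obtain ⟨n1, h1⟩ := H k
      rw [wordTake_eq_chunk, wordTake_eq_chunk] at h1
      obtain ⟨n, hn⟩ := ih n1
      exact ⟨n, by rw [Function.iterate_succ_apply, h1, hn]⟩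

lemma two_le_of_mem_ne {l : List A} {b1 b2 : A} (h1 : b1 ∈ l) (h2 : b2 ∈ l)
    (hne : b1 ≠ b2) : 2 ≤ l.length := by
  match l with
  | [] => simp at h1
  | [a] =>
      simp only [List.mem_singleton] at h1 h2
      exact absurd (h1.trans h2.symm) hne
  | a :: b :: t => simp only [List.length_cons]; omega

lemma img_head {f : A → List B} {x : ℕ → A} {y : ℕ → B} (H : IsMorphicImage f x y)
    (hf : NonErasing f) {k : ℕ} (hk : x k = x 0) : y (Lf f x k) = y 0 := by
  have h1 := morph_letter H k (List.length_pos_iff.mpr (hf (x k)))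
  have h2 := morph_letter H 0 (List.length_pos_iff.mpr (hf (x 0)))
  rw [Lf_zero] at h2
  simp only [hk] at h1
  exact h1.trans h2.symm

lemma block_transport {z : ℕ → B} {P : ℕ → ℕ} (hE : Enum z P)
    {a a' b b' : ℕ} (ha : a ≤ a') (hb : b ≤ b')
    (hwin : chunk z (P a) (P a') = chunk z (P b) (P b')) :
    a' - a = b' - b ∧ ∀ i, a + i < a' → gword z P (a + i) = gword z P (b + i) := by
  have hlen : P a' - P a = P b' - P b := by
    have := congrArg List.length hwin
    simpa using this
  apply hE.transport_gw ha hb hlen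
  intro i hi
  rcases eq_or_lt_of_le hi with he | hlt
  · have hm1 : P a ≤ P a' := hE.mono.monotone ha
    have hm2 : P b ≤ P b' := hE.mono.monotone hb
    have h1 : P a + i = P a' := by omega
    have h2 : P b + i = P b' := by omega
    rw [h1, h2, hE.mem, hE.mem]
  · exact DW.forall_of_chunk_eq hwin i hlt

end DW2


open DW DW2

/-- The derived word of a primitive morphic word `y` at the prefix
consisting of its first letter is primitive morphic. -/
theorem derivedWord_primitiveMorphic {A : Type*} [Fintype A] (y : ℕ → A)
    (hy : PrimitiveMorphic y) (d : ℕ → ℕ) (hd : IsDerivedWord y [y 0] d) :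
    PrimitiveMorphic d := by
  classical
  obtain ⟨A₀, instA₀, f, x, hfNE, ⟨τ, hτNE, ⟨N, hN1, hNall⟩, hτIm⟩, hfIm⟩ := hy
  obtain ⟨r, hr1, hr2, hr3⟩ := hd
  -- the power substitution G = τ^N
  set G : A₀ → List A₀ := fun a => (listApply τ)^[N] [a] with hGdef
  have hGapp : ∀ w, listApply G w = (listApply τ)^[N] w :=
    fun w => DW.listApply_iterate_pow τ N w
  have hGIm : IsMorphicImage G x x := by
    intro k
    obtain ⟨n, hn⟩ := DW2.morph_iterate hτIm N k
    refine ⟨n, ?_⟩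
    rw [wordTake_eq_chunk, wordTake_eq_chunk, hGapp, hn]
  have hGNE : NonErasing G := by
    intro a hnil
    have h1 := DW2.length_le_iterate hτNE N [a]
    rw [hGdef] at hnil
    simp only [hnil, List.length_nil, List.length_cons] at h1
    omega
  have hGall : ∀ a b, b ∈ G a := fun a b => hNall a b
  -- occurrences of the first letter of x are syndetic
  have hLGsm : StrictMono (Lf G x) := DW.Lf_strictMono hGNE x
  have hLG0 : Lf G x 0 = 0 := DW.Lf_zero G x
  have hLmax : ∀ a, (G a).length ≤ Finset.univ.sup (fun a : A₀ => (G a).length) :=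
    fun a => Finset.le_sup (f := fun a : A₀ => (G a).length) (Finset.mem_univ a)
  set Lmax := Finset.univ.sup (fun a : A₀ => (G a).length) with hLmaxdef
  have hblockocc : ∀ k, ∃ q, Lf G x k ≤ q ∧ q < Lf G x (k + 1) ∧ x q = x 0 := by
    intro k
    have hwin : listApply G (chunk x k (k + 1)) = chunk x (Lf G x k) (Lf G x (k + 1)) :=
      DW.morph_chunk hGIm (Nat.le_succ k)
    rw [chunk_singleton, listApply_singleton] at hwin
    have hx0mem : x 0 ∈ G (x k) := hGall (x k) (x 0)
    rw [hwin] at hx0mem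
    obtain ⟨i, hi, hix⟩ := DW.exists_of_mem_chunk hx0mem
    exact ⟨Lf G x k + i, by omega, by omega, hix⟩
  have hLGstep : ∀ k, Lf G x (k + 1) ≤ Lf G x k + Lmax := by
    intro k
    rw [DW.Lf_succ]
    have := hLmax (x k)
    omega
  have hnear : ∀ t, ∃ q, t < q ∧ q ≤ t + 2 * Lmax ∧ x q = x 0 := by
    intro t
    have hex : ∃ k, t < Lf G x k :=
      ⟨t + 1, lt_of_lt_of_le (by omega) hLGsm.le_apply⟩
    set k0 := Nat.find hex with hk0def
    have hk0 : t < Lf G x k0 := Nat.find_spec hex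
    have hk0ne : k0 ≠ 0 := by
      intro h
      rw [h, hLG0] at hk0
      omega
    have hprev : Lf G x (k0 - 1) ≤ t := by
      have := Nat.find_min hex (m := k0 - 1) (by omega)
      omega
    have hstep' := hLGstep (k0 - 1)
    rw [show k0 - 1 + 1 = k0 by omega] at hstep'
    obtain ⟨q, hq1, hq2, hq3⟩ := hblockocc k0
    have := hLGstep k0
    exact ⟨q, by omega, by omega, hq3⟩
  have hinf : {m | x m = x 0}.Infinite :=
    DW2.infinite_of_unbounded (fun t => by
      obtain ⟨q, h1, h2, h3⟩ := hnear t
      exact ⟨q, h1, h3⟩)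
  obtain ⟨p, hEx⟩ := DW2.enum_nth hinf
  have hgap : ∀ n, p (n + 1) ≤ p n + 2 * Lmax := by
    intro n
    obtain ⟨q, h1, h2, h3⟩ := hnear (p n)
    exact le_trans (hEx.next_le h1 h3) (by omega)
  -- the finite alphabet of return words of x
  obtain ⟨CC, instCC, val, enc, hval, hvalinj, hsurj⟩ :
      ∃ (CC : Type) (_ : Fintype CC) (val : CC → List A₀) (enc : ℕ → CC),
        (∀ n, val (enc n) = DW.gword x p n) ∧
          Function.Injective val ∧ Function.Surjective enc := by
    have hWfin : (Set.range (DW.gword x p)).Finite := by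
      apply (List.finite_length_le A₀ (2 * Lmax)).subset
      rintro w ⟨n, rfl⟩
      simp only [Set.mem_setOf_eq, DW.gword, length_chunk]
      have := hgap n
      have := hEx.mono (show n < n + 1 by omega)
      omega
    letI := hWfin.fintype
    refine ⟨↥(Set.range (DW.gword x p)), inferInstance, Subtype.val,
      fun n => ⟨DW.gword x p n, ⟨n, rfl⟩⟩, fun n => rfl, Subtype.val_injective, ?_⟩
    rintro ⟨w, n, rfl⟩
    exact ⟨n, rfl⟩
  letI : Fintype CC := instCC
  have hEq : ∀ a b, DW.gword x p a = DW.gword x p b → enc a = enc b := by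
    intro a b h
    apply hvalinj
    rw [hval, hval, h]
  obtain ⟨nc, hnc⟩ : ∃ nc : CC → ℕ, ∀ c, enc (nc c) = c :=
    ⟨fun c => (hsurj c).choose, fun c => (hsurj c).choose_spec⟩
  have hncg : ∀ n, DW.gword x p (nc (enc n)) = DW.gword x p n := by
    intro n
    rw [← hval, ← hval, hnc]
  -- the index map Φ induced by G
  have hxLG0 : ∀ k, x (Lf G x (p k)) = x 0 :=
    fun k => DW2.img_head hGIm hGNE (hEx.mem k)
  obtain ⟨Φ, hΦ⟩ : ∃ Φ : ℕ → ℕ, ∀ k, p (Φ k) = Lf G x (p k) :=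
    ⟨fun k => (hEx.complete _ (hxLG0 k)).choose,
     fun k => (hEx.complete _ (hxLG0 k)).choose_spec⟩
  have hΦsm : StrictMono Φ := by
    intro a b hab
    have h1 : p (Φ a) < p (Φ b) := by
      rw [hΦ a, hΦ b]
      exact hLGsm (hEx.mono hab)
    exact hEx.mono.lt_iff_lt.mp h1
  have hΦ0 : Φ 0 = 0 := by
    apply hEx.mono.injective
    rw [hΦ 0, hEx.zero, hLG0]
  have hxwin : ∀ a b, a ≤ b →
      chunk x (p (Φ a)) (p (Φ b)) = listApply G (chunk x (p a) (p b)) := by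
    intro a b hab
    rw [hΦ a, hΦ b]
    exact (DW.morph_chunk hGIm (hEx.mono.monotone hab)).symm
  -- the induced substitution
  obtain ⟨σ', hσval⟩ : ∃ σ' : CC → List CC,
      ∀ c, σ' c = chunk enc (Φ (nc c)) (Φ (nc c + 1)) :=
    ⟨fun c => chunk enc (Φ (nc c)) (Φ (nc c + 1)), fun c => rfl⟩
  have hblockσ : ∀ n, σ' (enc n) = chunk enc (Φ n) (Φ (n + 1)) := by
    intro n
    rw [hσval]
    set m := nc (enc n) with hmdef
    have hgm : DW.gword x p m = DW.gword x p n := hncg n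
    have hwin : chunk x (p (Φ m)) (p (Φ (m + 1))) = chunk x (p (Φ n)) (p (Φ (n + 1))) := by
      rw [hxwin m (m + 1) (by omega), hxwin n (n + 1) (by omega)]
      rw [show chunk x (p m) (p (m + 1)) = DW.gword x p m from rfl,
        show chunk x (p n) (p (n + 1)) = DW.gword x p n from rfl, hgm]
    obtain ⟨hcount, hgws⟩ := DW2.block_transport hEx
      (hΦsm.monotone (show m ≤ m + 1 by omega))
      (hΦsm.monotone (show n ≤ n + 1 by omega)) hwin
    apply DW.chunk_eq_of_forall
    · omega
    · intro i hi
      exact hEq _ _ (hgws i (by omega))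
  have hσfix : IsMorphicImage σ' enc enc := by
    intro k
    refine ⟨Φ k, ?_⟩
    rw [wordTake_eq_chunk, wordTake_eq_chunk]
    have := DW.assembly hblockσ hΦsm.monotone 0 k (by omega)
    rwa [hΦ0] at this
  have hσNE : NonErasing σ' := by
    intro c hc
    rw [hσval] at hc
    have hlen : 0 < (chunk enc (Φ (nc c)) (Φ (nc c + 1))).length := by
      rw [length_chunk]
      have := hΦsm (show nc c < nc c + 1 by omega)
      omega
    rw [hc] at hlen
    simp at hlen
  have hσPrim : Primitive σ' := by
    by_cases hcase : ∀ n, DW.gword x p n = DW.gword x p 0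
    · -- all return words coincide: CC is a subsingleton
      refine ⟨1, le_refl 1, ?_⟩
      intro a b
      rw [Function.iterate_one, DW.listApply_singleton]
      obtain ⟨c, hc⟩ := List.exists_mem_of_ne_nil (σ' a) (hσNE a)
      obtain ⟨n1, hn1⟩ := hsurj c
      obtain ⟨n2, hn2⟩ := hsurj b
      have : c = b := by
        rw [← hn1, ← hn2]
        exact hEq n1 n2 (by rw [hcase n1, hcase n2])
      rwa [this] at hc
    · push_neg at hcase
      obtain ⟨n0, hn0⟩ := hcase
      -- x is not constant
      have hxnc : ∃ m, x m ≠ x 0 := by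
        by_contra hcon
        push_neg at hcon
        have hpstep : ∀ n, p (n + 1) = p n + 1 := by
          intro n
          have h1 : p n < p (n + 1) := hEx.mono (by omega)
          have h2 : p (n + 1) ≤ p n + 1 := hEx.next_le (by omega) (hcon (p n + 1))
          omega
        have hgw1 : ∀ n, DW.gword x p n = [x 0] := by
          intro n
          rw [show DW.gword x p n = chunk x (p n) (p (n + 1)) from rfl, hpstep n,
            chunk_singleton, hcon (p n)]
        rw [hgw1 n0, hgw1 0] at hn0
        exact hn0 rfl
      obtain ⟨m0, hm0⟩ := hxnc
      have hG2 : ∀ a, 2 ≤ (G a).length := by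
        intro a
        exact DW2.two_le_of_mem_ne (hGall a (x m0)) (hGall a (x 0)) hm0
      have hgrow : ∀ M (w : List A₀), 2 ^ M * w.length ≤ ((listApply G)^[M] w).length := by
        intro M
        induction M with
        | zero => intro w; simpa using le_refl w.length
        | succ M ih =>
            intro w
            rw [Function.iterate_succ_apply]
            calc 2 ^ (M + 1) * w.length = 2 ^ M * (2 * w.length) := by ring
            _ ≤ 2 ^ M * (listApply G w).length :=
                Nat.mul_le_mul_left _ (DW.two_mul_length_le_listApply hG2 w)
            _ ≤ _ := ih (listApply G w)
      have hpreM : ∀ M, ∃ plen, (listApply G)^[M] (chunk x 0 1) = chunk x 0 plen ∧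
          2 ^ M ≤ plen := by
        intro M
        obtain ⟨n, hn⟩ := DW2.morph_iterate hGIm M 1
        refine ⟨n, hn, ?_⟩
        have h1 := hgrow M (chunk x 0 1)
        rw [hn, length_chunk, length_chunk] at h1
        omega
      have hΦM : ∀ M {s t : ℕ}, s ≤ t → Φ^[M] s ≤ Φ^[M] t := by
        intro M
        induction M with
        | zero => exact fun h => h
        | succ M ih =>
            intro s t h
            rw [Function.iterate_succ_apply', Function.iterate_succ_apply']
            exact hΦsm.monotone (ih h)
      have hiterseg : ∀ M s t, s ≤ t →
          (listApply σ')^[M] (chunk enc s t) = chunk enc (Φ^[M] s) (Φ^[M] t) := by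
        intro M
        induction M with
        | zero => intro s t h; rfl
        | succ M ih =>
            intro s t h
            rw [Function.iterate_succ_apply' (f := listApply σ'), ih s t h,
              Function.iterate_succ_apply' (f := Φ), Function.iterate_succ_apply' (f := Φ)]
            exact DW.assembly hblockσ hΦsm.monotone _ _ (hΦM M h)
      have hxwinM : ∀ M n, chunk x (p (Φ^[M] n)) (p (Φ^[M] (n + 1)))
          = (listApply G)^[M] (DW.gword x p n) := by
        intro M n
        induction M with
        | zero => rfl
        | succ M ih =>
            rw [Function.iterate_succ_apply' (f := Φ), Function.iterate_succ_apply' (f := Φ),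
              Function.iterate_succ_apply' (f := listApply G), ← ih]
            exact hxwin (Φ^[M] n) (Φ^[M] (n + 1)) (hΦM M (by omega))
      set Kbd := Finset.univ.sup (fun c : CC => p (nc c + 1) + 1) with hKbddef
      refine ⟨Kbd + 1, by omega, ?_⟩
      intro a b
      set M := Kbd + 1 with hMdef
      set n := nc a with hndef
      set j := nc b with hjdef
      have hcE : enc n = a := hnc a
      have hc'E : enc j = b := hnc b
      rw [show [a] = chunk enc n (n + 1) from by rw [chunk_singleton, hcE],
        hiterseg M n (n + 1) (by omega)]
      have hwinM := hxwinM M n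
      have hgcons : ∃ tl, DW.gword x p n = chunk x 0 1 ++ tl := by
        have h1 : p n < p (n + 1) := hEx.mono (by omega)
        have hsp : DW.gword x p n = chunk x (p n) (p n + 1) ++ chunk x (p n + 1) (p (n + 1)) :=
          (chunk_append x (by omega) (by omega)).symm
        refine ⟨chunk x (p n + 1) (p (n + 1)), ?_⟩
        rw [hsp, chunk_singleton, hEx.mem n,
          show chunk x 0 1 = [x 0] from by simpa using chunk_singleton x 0]
      obtain ⟨tl, htl⟩ := hgcons
      obtain ⟨plen, hpre, hplen⟩ := hpreM M
      have hsplit : chunk x (p (Φ^[M] n)) (p (Φ^[M] (n + 1)))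
          = chunk x 0 plen ++ (listApply G)^[M] tl := by
        rw [hwinM, htl, DW.listApply_iterate_append, hpre]
      have hlenwin : p (Φ^[M] (n + 1)) - p (Φ^[M] n) = plen + ((listApply G)^[M] tl).length := by
        have h := congrArg List.length hsplit
        simpa using h
      have hA12 : p (Φ^[M] n) ≤ p (Φ^[M] (n + 1)) := hEx.mono.monotone (hΦM M (by omega))
      have hprefix : chunk x (p (Φ^[M] n)) (p (Φ^[M] n) + plen) = chunk x 0 plen := by
        have h1 : chunk x (p (Φ^[M] n)) (p (Φ^[M] n) + plen)
            ++ chunk x (p (Φ^[M] n) + plen) (p (Φ^[M] (n + 1)))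
            = chunk x (p (Φ^[M] n)) (p (Φ^[M] (n + 1))) :=
          chunk_append x (by omega) (by omega)
        rw [hsplit] at h1
        exact (List.append_inj h1 (by rw [length_chunk, length_chunk]; omega)).1
      have hpw : ∀ i, i < plen → x (p (Φ^[M] n) + i) = x i := by
        intro i hi
        have h := DW.forall_of_chunk_eq hprefix i (by omega)
        simpa using h
      have hjbound : p (j + 1) + 1 ≤ Kbd := by
        rw [hKbddef, hjdef]
        exact Finset.le_sup (f := fun c : CC => p (nc c + 1) + 1) (Finset.mem_univ b)
      have hKM : Kbd < 2 ^ M := by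
        have := Nat.lt_two_pow_self (n := M)
        omega
      have hplen2 : p (j + 1) + 1 ≤ plen := by omega
      have hjj : p j ≤ p (j + 1) := hEx.mono.monotone (by omega)
      obtain ⟨a', ha1, ha2, ha3⟩ := hEx.occurrence (j := j) (t := p (Φ^[M] n) + p j) (by
        intro i hi
        have h1 : p j + i < plen := by omega
        have h2 := hpw (p j + i) h1
        rw [show p (Φ^[M] n) + (p j + i) = p (Φ^[M] n) + p j + i by omega] at h2
        exact h2)
      have haA1 : Φ^[M] n ≤ a' := by
        apply hEx.mono.le_iff_le.mp
        omega
      have haA2 : a' < Φ^[M] (n + 1) := by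
        have h1 : p (a' + 1) < p (Φ^[M] (n + 1)) := by omega
        have h2 := hEx.mono.lt_iff_lt.mp h1
        omega
      apply DW.mem_chunk_of enc (i := a' - Φ^[M] n) (by omega)
      rw [show Φ^[M] n + (a' - Φ^[M] n) = a' by omega, ← hc'E]
      exact hEq a' j ha3
  -- the enumeration S of the occurrences of y 0 given by the return words r
  have hfacts : ∀ n, 0 < (r n).length ∧ ∀ i (hi : i ≤ (r n).length),
      ((r n ++ [y 0])[i]'(by simpa using Nat.lt_succ_of_le hi) = y 0 ↔
        (i = 0 ∨ i = (r n).length)) :=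
    fun n => DW2.occ_single (hr1 n).2.2.1 (hr1 n).2.2.2
  have hS0 : (∑ i ∈ Finset.range 0, (r i).length) = 0 := by simp
  have hSsucc : ∀ n, (∑ i ∈ Finset.range (n + 1), (r i).length)
      = (∑ i ∈ Finset.range n, (r i).length) + (r n).length :=
    fun n => Finset.sum_range_succ _ n
  set S : ℕ → ℕ := fun n => ∑ i ∈ Finset.range n, (r i).length with hSdef
  have hSs : ∀ n, S (n + 1) = S n + (r n).length := hSsucc
  have hrchunk : ∀ n, chunk y (S n) (S n + (r n).length + 1) = r n ++ [y 0] := by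
    intro n
    have h := (occursAt_iff_chunk (r n ++ [y 0]) y (S n)).mp (hr2 n)
    rw [show S n + (r n ++ [y 0]).length = S n + (r n).length + 1 from by
      simp; omega] at h
    exact h
  have hEy : Enum y S := by
    apply DW.Enum.of_not_between hS0
    · apply strictMono_nat_of_lt_succ
      intro n
      have h1 := hSs n
      have h2 := (hfacts n).1
      omega
    · intro n
      have h0 := DW.chunk_eq_list (hrchunk n) (i := 0) (by have := (hfacts n).1; omega)
      have h1 := ((hfacts n).2 0 (by omega)).mpr (Or.inl rfl)
      simpa using h0.trans h1
    · intro n m hm1 hm2 hmy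
      have hm2' : m < S n + (r n).length := by
        have := hSs n
        omega
      have hilt : 0 < m - S n ∧ m - S n < (r n).length := by omega
      have h0 := DW.chunk_eq_list (hrchunk n) (i := m - S n) (by omega)
      rw [show S n + (m - S n) = m by omega] at h0
      have h1 := ((hfacts n).2 (m - S n) (by omega)).mp (by rw [← h0]; exact hmy)
      omega
  have hrg : ∀ n, r n = DW.gword y S n := by
    intro n
    have h1 : chunk y (S n) (S n + (r n).length)
        ++ chunk y (S n + (r n).length) (S n + (r n).length + 1)
        = chunk y (S n) (S n + (r n).length + 1) :=
      chunk_append y (by omega) (by omega)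
    rw [hrchunk n] at h1
    have h2 := (List.append_inj h1 (by rw [length_chunk]; omega)).1
    have h3 : S (n + 1) = S n + (r n).length := hSs n
    rw [DW.gword, h3]
    exact h2.symm
  -- the index map Ψ induced by f
  have hyV : ∀ k, y (Lf f x (p k)) = y 0 := fun k => DW2.img_head hfIm hfNE (hEx.mem k)
  obtain ⟨Ψ, hΨ⟩ : ∃ Ψ : ℕ → ℕ, ∀ k, S (Ψ k) = Lf f x (p k) :=
    ⟨fun k => (hEy.complete _ (hyV k)).choose,
     fun k => (hEy.complete _ (hyV k)).choose_spec⟩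
  have hΨsm : StrictMono Ψ := by
    intro a b hab
    have h1 : S (Ψ a) < S (Ψ b) := by
      rw [hΨ a, hΨ b]
      exact (DW.Lf_strictMono hfNE x) (hEx.mono hab)
    exact hEy.mono.lt_iff_lt.mp h1
  have hΨ0 : Ψ 0 = 0 := by
    apply hEy.mono.injective
    rw [hΨ 0, hEx.zero, DW.Lf_zero, hEy.zero]
  have hywin : ∀ a b, a ≤ b →
      chunk y (S (Ψ a)) (S (Ψ b)) = listApply f (chunk x (p a) (p b)) := by
    intro a b hab
    rw [hΨ a, hΨ b]
    exact (DW.morph_chunk hfIm (hEx.mono.monotone hab)).symm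
  -- the morphism g sending a return word of x to the ranks of the return words of y
  obtain ⟨g, hgval⟩ : ∃ g : CC → List ℕ,
      ∀ c, g c = chunk d (Ψ (nc c)) (Ψ (nc c + 1)) :=
    ⟨fun c => chunk d (Ψ (nc c)) (Ψ (nc c + 1)), fun c => rfl⟩
  have hblockg : ∀ n, g (enc n) = chunk d (Ψ n) (Ψ (n + 1)) := by
    intro n
    rw [hgval]
    set m := nc (enc n) with hmdef
    have hgm : DW.gword x p m = DW.gword x p n := hncg n
    have hwin : chunk y (S (Ψ m)) (S (Ψ (m + 1))) = chunk y (S (Ψ n)) (S (Ψ (n + 1))) := by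
      rw [hywin m (m + 1) (by omega), hywin n (n + 1) (by omega)]
      rw [show chunk x (p m) (p (m + 1)) = DW.gword x p m from rfl,
        show chunk x (p n) (p (n + 1)) = DW.gword x p n from rfl, hgm]
    obtain ⟨hcount, hgws⟩ := DW2.block_transport hEy
      (hΨsm.monotone (show m ≤ m + 1 by omega))
      (hΨsm.monotone (show n ≤ n + 1 by omega)) hwin
    apply DW.chunk_eq_of_forall
    · omega
    · intro i hi
      have hreq : r (Ψ m + i) = r (Ψ n + i) := by
        rw [hrg, hrg]
        exact hgws i (by omega)
      rw [hr3 (Ψ m + i), hr3 (Ψ n + i), hreq]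
  have hgNE : NonErasing g := by
    intro c hc
    rw [hgval] at hc
    have hlen : 0 < (chunk d (Ψ (nc c)) (Ψ (nc c + 1))).length := by
      rw [length_chunk]
      have := hΨsm (show nc c < nc c + 1 by omega)
      omega
    rw [hc] at hlen
    simp at hlen
  have hgIm : IsMorphicImage g enc d := by
    intro k
    refine ⟨Ψ k, ?_⟩
    rw [wordTake_eq_chunk, wordTake_eq_chunk]
    have := DW.assembly hblockg hΨsm.monotone 0 k (by omega)
    rwa [hΨ0] at this
  exact ⟨CC, instCC, g, enc, hgNE, ⟨σ', hσNE, hσPrim, hσfix⟩, hgIm⟩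
end

section
/- Let x be the fixed point beginning in the letter a of the substitution f : a ↦ ac, b ↦ acab, c ↦ ab on {a, b, c}, and let z be the infinite word defined by z_n = x_{n+2} for all n (the second shift of x). Then z is a fixed point of the substitution g : a ↦ ab, b ↦ acac, c ↦ ac, and g is of class P. -/
open List

namespace LabbeAux

abbrev F : Fin 3 → List (Fin 3) := ![[0, 2], [0, 2, 0, 1], [0, 1]]
abbrev G : Fin 3 → List (Fin 3) := ![[0, 1], [0, 2, 0, 2], [0, 2]]

lemma F0 : F 0 = [0, 2] := rfl
lemma F1 : F 1 = [0, 2, 0, 1] := rfl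
lemma F2 : F 2 = [0, 1] := rfl
lemma G0 : G 0 = [0, 1] := rfl
lemma G1 : G 1 = [0, 2, 0, 2] := rfl
lemma G2 : G 2 = [0, 2] := rfl

lemma tri : ∀ a : Fin 3, a = 0 ∨ a = 1 ∨ a = 2 := by decide

lemma wordTake_len {A : Type*} (x : ℕ → A) (n : ℕ) : (wordTake x n).length = n := by
  simp [wordTake]

lemma wordTake_add {A : Type*} (x : ℕ → A) (p q : ℕ) :
    wordTake x (p + q) = wordTake x p ++ (List.range q).map (fun j => x (p + j)) := by
  simp [wordTake, List.range_add, Function.comp]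

lemma listApply_succ {A B : Type*} (f : A → List B) (x : ℕ → A) (n : ℕ) :
    listApply f (wordTake x (n + 1)) = listApply f (wordTake x n) ++ f (x n) := by
  simp [wordTake, List.range_succ, listApply]

variable (x : ℕ → Fin 3)

def Lf (k : ℕ) : ℕ := (listApply F (wordTake x k)).length

variable (hfix : ∀ k, ∃ n, listApply F (wordTake x k) = wordTake x n)
include hfix

lemma prefF (k : ℕ) : listApply F (wordTake x k) = wordTake x (Lf x k) := by
  obtain ⟨n, hn⟩ := hfix k
  have h : Lf x k = n := by rw [Lf, hn, wordTake_len]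
  rw [h]; exact hn

omit hfix in
lemma Lf_zero : Lf x 0 = 0 := by simp [Lf, wordTake, listApply]

omit hfix in
lemma Lf_succ (k : ℕ) : Lf x (k + 1) = Lf x k + (F (x k)).length := by
  simp [Lf, listApply_succ]

lemma block (k : ℕ) :
    (List.range (F (x k)).length).map (fun j => x (Lf x k + j)) = F (x k) := by
  have h1 := prefF x hfix (k + 1)
  rw [listApply_succ, prefF x hfix k, Lf_succ, wordTake_add] at h1
  exact (List.append_cancel_left h1).symm

omit hfix in
lemma cover (n : ℕ) : ∃ k, Lf x k ≤ n ∧ n < Lf x (k + 1) := by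
  have hpos : ∀ a : Fin 3, 0 < (F a).length := by decide
  induction n with
  | zero =>
    exact ⟨0, by rw [Lf_zero], by rw [Lf_succ, Lf_zero]; simpa using hpos (x 0)⟩
  | succ n ih =>
    obtain ⟨k, h1, h2⟩ := ih
    by_cases h : n + 1 < Lf x (k + 1)
    · exact ⟨k, by omega, h⟩
    · refine ⟨k + 1, by omega, ?_⟩
      rw [Lf_succ]
      have := hpos (x (k + 1))
      omega

lemma first_letter (k : ℕ) : x (Lf x k) = 0 := by
  have hb := block x hfix k
  rcases tri (x k) with h | h | h <;> rw [h] at hb <;>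
    simp [F0, F1, F2, List.range_succ] at hb <;> tauto

lemma inv (n : ℕ) : x (n + 1) ≠ 0 ↔ x n = 0 := by
  obtain ⟨k, h1, h2⟩ := cover x n
  have hb := block x hfix k
  have hL := Lf_succ x k
  have hfl := first_letter x hfix (k + 1)
  rcases tri (x k) with h | h | h <;> rw [h] at hb hL <;>
      simp [F0, F1, F2, List.range_succ] at hb hL
  · -- block [0,2]
    have hj : n = Lf x k ∨ n = Lf x k + 1 := by omega
    rcases hj with hj | hj <;> subst hj
    · rw [hb.1, hb.2]; simp
    · have e : Lf x k + 1 + 1 = Lf x (k + 1) := by omega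
      rw [e, hfl, hb.2]; simp
  · -- block [0,2,0,1]
    have hj : n = Lf x k ∨ n = Lf x k + 1 ∨ n = Lf x k + 2 ∨ n = Lf x k + 3 := by omega
    obtain ⟨e0, e1, e2, e3⟩ := hb
    rcases hj with hj | hj | hj | hj <;> subst hj
    · rw [e0, e1]; simp
    · have h12 : Lf x k + 1 + 1 = Lf x k + 2 := by omega
      rw [h12, e1, e2]; simp
    · have h23 : Lf x k + 2 + 1 = Lf x k + 3 := by omega
      rw [h23, e2, e3]; simp
    · have h34 : Lf x k + 3 + 1 = Lf x (k + 1) := by omega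
      rw [h34, hfl, e3]; simp
  · -- block [0,1]
    have hj : n = Lf x k ∨ n = Lf x k + 1 := by omega
    rcases hj with hj | hj <;> subst hj
    · rw [hb.1, hb.2]; simp
    · have e : Lf x k + 1 + 1 = Lf x (k + 1) := by omega
      rw [e, hfl, hb.2]; simp

lemma main (k : ℕ) :
    (List.range (G (x (k + 2))).length).map (fun j => x ((Lf x (k + 2) - 2) + j))
      = G (x (k + 2)) := by
  have hb1 := block x hfix (k + 1)
  have hb2 := block x hfix (k + 2)
  have hL : Lf x (k + 2) = Lf x (k + 1) + (F (x (k + 1))).length := Lf_succ x (k + 1)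
  have hinv := inv x hfix (k + 1)
  rcases tri (x (k + 1)) with h1 | h1 | h1 <;>
    rcases tri (x (k + 2)) with h2 | h2 | h2 <;>
    rw [h1, h2] at hinv <;>
    first
    | (exfalso; revert hinv; decide)
    | (rw [h1] at hb1 hL
       rw [h2] at hb2 ⊢
       simp [F0, F1, F2, G0, G1, G2, List.range_succ] at hb1 hb2 hL ⊢)
  · -- (0,1) : need [0,2,0,2] at Lf(k+1)
    have e : Lf x (k + 2) - 2 = Lf x (k + 1) := by omega
    obtain ⟨f0, f1, f2, f3⟩ := hb2
    have e2 : Lf x (k + 1) + 2 = Lf x (k + 2) := by omega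
    have e3 : Lf x (k + 1) + 3 = Lf x (k + 2) + 1 := by omega
    rw [e, e2, e3]
    exact ⟨hb1.1, hb1.2, f0, f1⟩
  · -- (0,2) : need [0,2] at Lf(k+1)
    have e : Lf x (k + 2) - 2 = Lf x (k + 1) := by omega
    rw [e]
    exact ⟨hb1.1, hb1.2⟩
  · -- (1,0) : need [0,1] at Lf(k+1)+2
    have e : Lf x (k + 2) - 2 = Lf x (k + 1) + 2 := by omega
    have e3 : Lf x (k + 1) + 2 + 1 = Lf x (k + 1) + 3 := by omega
    rw [e, e3]
    exact ⟨hb1.2.2.1, hb1.2.2.2⟩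
  · -- (2,0) : need [0,1] at Lf(k+1)
    have e : Lf x (k + 2) - 2 = Lf x (k + 1) := by omega
    rw [e]
    exact ⟨hb1.1, hb1.2⟩

end LabbeAux

/-- With `a = 0, b = 1, c = 2` on `Fin 3` : if `x` is the fixed point
beginning in `a` of `a ↦ ac, b ↦ acab, c ↦ ab` and `z` is its second shift, then `z` is a
fixed point of `g : a ↦ ab, b ↦ acac, c ↦ ac`, and `g` is of class P. -/
theorem labbe_shift_classP_fixedPoint (x : ℕ → Fin 3)
    (hfix : IsMorphicImage (![[0, 2], [0, 2, 0, 1], [0, 1]] : Fin 3 → List (Fin 3)) x x)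
    (h0 : x 0 = 0) (z : ℕ → Fin 3) (hz : ∀ n, z n = x (n + 2)) :
    IsMorphicImage (![[0, 1], [0, 2, 0, 2], [0, 2]] : Fin 3 → List (Fin 3)) z z ∧
      ClassP (![[0, 1], [0, 2, 0, 2], [0, 2]] : Fin 3 → List (Fin 3)) := by
  open LabbeAux in
  have hfix' : ∀ k, ∃ n, listApply F (wordTake x k) = wordTake x n := hfix
  have hlen : ∀ a : Fin 3, (G a).length = (F a).length := by decide
  -- x 1 = 2
  have hb0 := LabbeAux.block x hfix' 0
  rw [h0, LabbeAux.Lf_zero] at hb0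
  rw [LabbeAux.F0] at hb0
  simp [List.range_succ] at hb0
  obtain ⟨hx0, hx1⟩ := hb0
  -- Lf x 2 = 4
  have hL1 : Lf x 1 = 2 := by
    rw [LabbeAux.Lf_succ, LabbeAux.Lf_zero, h0, LabbeAux.F0]; rfl
  have hL2 : Lf x 2 = 4 := by
    rw [LabbeAux.Lf_succ, hL1, hx1, LabbeAux.F2]; rfl
  have claim : ∀ k, ∃ m, listApply G (wordTake z k) = wordTake z m ∧
      m + 4 = Lf x (k + 2) := by
    intro k
    induction k with
    | zero => exact ⟨0, by simp [wordTake, listApply], by rw [hL2]⟩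
    | succ k ih =>
      obtain ⟨m, hm, hm4⟩ := ih
      refine ⟨m + (G (z k)).length, ?_, ?_⟩
      · rw [LabbeAux.listApply_succ, hm, LabbeAux.wordTake_add]
        congr 1
        have key := LabbeAux.main x hfix' k
        rw [hz k]
        have e : (List.range (G (x (k + 2))).length).map (fun j => z (m + j))
            = (List.range (G (x (k + 2))).length).map
                (fun j => x ((Lf x (k + 2) - 2) + j)) := by
          apply List.map_congr_left
          intro j _
          rw [hz (m + j)]
          congr 1
          omega
        rw [e]
        exact key.symm
      · rw [hz k, LabbeAux.Lf_succ, hlen (x (k + 2))]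
        omega
  constructor
  · intro k
    obtain ⟨m, hm, _⟩ := claim k
    exact ⟨m, hm⟩
  · refine ⟨[0], by unfold IsPalindrome; decide, ?_⟩
    intro a
    rcases LabbeAux.tri a with h | h | h <;> subst h
    · exact ⟨[1], by unfold IsPalindrome; decide, by decide⟩
    · exact ⟨[2, 0, 2], by unfold IsPalindrome; decide, by decide⟩
    · exact ⟨[2], by unfold IsPalindrome; decide, by decide⟩
end

section
/- Let y be the fixed point beginning in the letter c of the substitution τ : b ↦ ccb, c ↦ cb on {b, c}, let h : {b,c}* → {a,b,c}* be the morphism b ↦ ab, c ↦ ac (which inserts the letter a before every occurrence of b and of c), and let x be the fixed point beginning in the letter a of the substitution f : a ↦ ac, b ↦ acab, c ↦ ab on {a, b, c}. Then x = h(y). -/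
open List

section Aux

variable {A B : Type*}

lemma wordTake_length (x : ℕ → A) (n : ℕ) : (wordTake x n).length = n := by
  simp [wordTake]

lemma wordTake_take (x : ℕ → A) (n l : ℕ) :
    (wordTake x n).take l = wordTake x (min l n) := by
  simp [wordTake, ← List.map_take, List.take_range]

lemma prefix_wordTake_eq {x : ℕ → A} {u : List A} {n : ℕ} (h : u <+: wordTake x n) :
    u = wordTake x u.length := by
  obtain ⟨t, ht⟩ := h
  have hlen : u.length ≤ n := by
    have := congrArg List.length ht
    simp [wordTake_length] at this
    omega
  have : (wordTake x n).take u.length = u := by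
    rw [← ht]; simp
  rw [← this, wordTake_take, min_eq_left hlen, wordTake_length]

lemma listApply_listApply {C : Type*} (f : A → List B) (g : B → List C) (w : List A) :
    listApply g (listApply f w) = listApply (fun a => listApply g (f a)) w := by
  induction w with
  | nil => rfl
  | cons a w ih => simp only [listApply, List.flatMap_cons] at *; rw [← ih]; simp [listApply]

lemma iter_morphic {σ : A → List A} {x : ℕ → A} (h : IsMorphicImage σ x x) (m : ℕ) :
    ∀ k, ∃ n, (listApply σ)^[m] (wordTake x k) = wordTake x n := by
  induction m with
  | zero => exact fun k => ⟨k, rfl⟩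
  | succ m ih =>
    intro k
    obtain ⟨n, hn⟩ := h k
    obtain ⟨n', hn'⟩ := ih n
    exact ⟨n', by rw [Function.iterate_succ_apply, hn, hn']⟩

end Aux

section Labbe

private def τ' : Fin 2 → List (Fin 2) := ![[1, 1, 0], [1, 0]]
private def f' : Fin 3 → List (Fin 3) := ![[0, 2], [0, 2, 0, 1], [0, 1]]
private def h' : Fin 2 → List (Fin 3) := ![[0, 1], [0, 2]]

private lemma h_tau_letter : ∀ a : Fin 2, listApply h' (τ' a) = listApply f' (h' a) := by
  decide

private lemma h_tau (w : List (Fin 2)) :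
    listApply h' (listApply τ' w) = listApply f' (listApply h' w) := by
  rw [listApply_listApply, listApply_listApply]
  exact congrFun (congrArg _ (funext h_tau_letter)) w

private lemma h_tau_iter (m : ℕ) (w : List (Fin 2)) :
    listApply h' ((listApply τ')^[m] w) = (listApply f')^[m] (listApply h' w) := by
  induction m generalizing w with
  | zero => rfl
  | succ m ih =>
    rw [Function.iterate_succ_apply', Function.iterate_succ_apply', h_tau, ih]

private lemma tau_len (w : List (Fin 2)) :
    2 * w.length ≤ (listApply τ' w).length := by
  induction w with
  | nil => simp [listApply]
  | cons a w ih =>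
    have ha : 2 ≤ (τ' a).length := by fin_cases a <;> decide
    simp only [listApply, List.flatMap_cons, List.length_append, List.length_cons]
    simp only [listApply] at ih
    omega

private lemma tau_iter_len (m : ℕ) (w : List (Fin 2)) (hw : 1 ≤ w.length) :
    m + 1 ≤ ((listApply τ')^[m] w).length := by
  induction m with
  | zero => simpa
  | succ m ih =>
    rw [Function.iterate_succ_apply']
    have := tau_len ((listApply τ')^[m] w)
    omega

end Labbe

/-- With `{b, c}` encoded as `Fin 2` (`b = 0, c = 1`) and `{a, b, c}` as
`Fin 3` (`a = 0, b = 1, c = 2`) : if `y` is the fixed point beginning in `c` of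
`τ : b ↦ ccb, c ↦ cb`, `h : b ↦ ab, c ↦ ac`, and `x` is the fixed point beginning in `a`
of `f : a ↦ ac, b ↦ acab, c ↦ ab`, then `x = h(y)`. -/
theorem labbe_word_eq_image (y : ℕ → Fin 2)
    (hy : IsMorphicImage (![[1, 1, 0], [1, 0]] : Fin 2 → List (Fin 2)) y y)
    (hy0 : y 0 = 1) (x : ℕ → Fin 3)
    (hx : IsMorphicImage (![[0, 2], [0, 2, 0, 1], [0, 1]] : Fin 3 → List (Fin 3)) x x)
    (hx0 : x 0 = 0) :
    IsMorphicImage (![[0, 1], [0, 2]] : Fin 2 → List (Fin 3)) y x := by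
  intro k
  -- wordTake y 1 = [1]
  have hy1 : wordTake y 1 = [1] := by simp [wordTake, List.range_succ, hy0]
  -- wordTake x 2 = [0, 2]
  have hx1 : wordTake x 1 = [0] := by simp [wordTake, List.range_succ, hx0]
  have hx2 : wordTake x 2 = [0, 2] := by
    obtain ⟨n, hn⟩ := hx 1
    rw [hx1] at hn
    have hn2 : n = 2 := by
      have := congrArg List.length hn
      simpa [listApply, f', wordTake_length] using this.symm
    subst hn2
    simpa [listApply, f'] using hn.symm
  -- τ'^[k] [1] is a prefix of y of length ≥ k+1
  obtain ⟨K, hK⟩ := iter_morphic (σ := τ') hy k 1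
  rw [hy1] at hK
  have hlenK : k + 1 ≤ K := by
    have h1 := tau_iter_len k [1] (by simp)
    rw [hK, wordTake_length] at h1
    omega
  -- wordTake y k is a prefix of τ'^[k] [1]
  have hpref : wordTake y k <+: (listApply τ')^[k] [1] := by
    rw [hK]
    have htk : (wordTake y K).take k = wordTake y k := by
      rw [wordTake_take, min_eq_left (by omega)]
    exact ⟨(wordTake y K).drop k, by rw [← htk, List.take_append_drop]⟩
  -- image under h' is a prefix of f'^[k] [0,2] which is a prefix of x
  obtain ⟨N, hN⟩ := iter_morphic (σ := f') hx k 2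
  rw [hx2] at hN
  have himg : listApply h' (wordTake y k) <+: wordTake x N := by
    rw [← hN, ← show listApply h' [1] = [0, 2] from rfl, ← h_tau_iter]
    obtain ⟨t, ht⟩ := hpref
    exact ⟨listApply h' t, by rw [← ht]; simp [listApply]⟩
  have := prefix_wordTake_eq himg
  exact ⟨(listApply h' (wordTake y k)).length, by
    show listApply h' (wordTake y k) = _
    exact this⟩
end

section
/- Every finite word u has at most |u| + 1 distinct palindromic factors, including the empty word; that is, #Pal(u) ≤ |u| + 1. -/
open List

lemma palSet_finite {A : Type*} (w : List A) :
    {v : List A | v <:+: w ∧ IsPalindrome v}.Finite := by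
  apply Set.Finite.subset (List.finite_toSet w.sublists)
  intro v hv
  simpa [List.mem_sublists] using hv.1.sublist

/-- A factor of `u ++ [a]` which is not a factor of `u` is a suffix of `u ++ [a]`. -/
lemma suffix_of_new {A : Type*} {u v : List A} {a : A}
    (h : v <:+: u ++ [a]) (h2 : ¬ v <:+: u) : v <:+ u ++ [a] := by
  obtain ⟨s, t, hst⟩ := h
  rcases t.eq_nil_or_concat with rfl | ⟨t', b, rfl⟩
  · exact ⟨s, by simpa using hst⟩
  · exfalso
    apply h2
    have hst' : (s ++ v ++ t') ++ [b] = u ++ [a] := by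
      simp only [List.append_assoc, List.concat_eq_append] at hst ⊢; exact hst
    have := (List.append_inj' hst' rfl).1
    exact ⟨s, t', by simpa [List.append_assoc] using this⟩

lemma new_unique {A : Type*} {u v₁ v₂ : List A} {a : A}
    (h1 : v₁ <:+ u ++ [a]) (h2 : v₂ <:+ u ++ [a])
    (p1 : IsPalindrome v₁) (p2 : IsPalindrome v₂)
    (n1 : ¬ v₁ <:+: u) (hle : v₁.length ≤ v₂.length) : v₁ = v₂ := by
  have hsuf : v₁ <:+ v₂ := List.suffix_of_suffix_length_le h1 h2 hle
  rcases eq_or_lt_of_le hle with heq | hlt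
  · exact hsuf.eq_of_length heq
  · exfalso
    apply n1
    -- v₁ is a prefix of v₂ since both are palindromes
    have hpre : v₁ <+: v₂ := by
      have := List.reverse_prefix.mpr hsuf
      rwa [p1, p2] at this
    obtain ⟨t, ht⟩ := hpre
    obtain ⟨s, hs⟩ := h2
    have htne : t ≠ [] := by
      rintro rfl
      simp only [List.concat_nil, List.append_nil] at ht
      subst ht
      exact lt_irrefl _ hlt
    rcases t.eq_nil_or_concat with rfl | ⟨t', b, rfl⟩
    · exact absurd rfl htne
    · rw [← ht, List.concat_eq_append] at hs
      have hs' : (s ++ v₁ ++ t') ++ [b] = u ++ [a] := by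
        simp only [List.append_assoc] at hs ⊢; exact hs
      have := (List.append_inj' hs' rfl).1
      exact ⟨s, t', by simpa [List.append_assoc] using this⟩

/-- Every finite word `u` has at most `|u| + 1` distinct palindromic
factors (including the empty word). -/
theorem palCount_le {A : Type*} (u : List A) : palCount u ≤ u.length + 1 := by
  induction u using List.reverseRecOn with
  | nil =>
      have : {v : List A | v <:+: [] ∧ IsPalindrome v} = {[]} := by
        ext v
        simp only [Set.mem_setOf_eq, Set.mem_singleton_iff]
        constructor
        · rintro ⟨h, -⟩; simpa using h.sublist
        · rintro rfl; exact ⟨List.infix_rfl, rfl⟩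
      unfold palCount
      rw [this, Set.ncard_singleton]
      simp
  | append_singleton u a ih =>
      set S := {v : List A | v <:+: u ∧ IsPalindrome v} with hS
      set T := {v : List A | v <:+: u ++ [a] ∧ IsPalindrome v} with hT
      have hsub : (T \ S).Subsingleton := by
        rintro v₁ ⟨⟨hv₁, hp₁⟩, hn₁⟩ v₂ ⟨⟨hv₂, hp₂⟩, hn₂⟩
        have hn₁' : ¬ v₁ <:+: u := fun h => hn₁ ⟨h, hp₁⟩
        have hn₂' : ¬ v₂ <:+: u := fun h => hn₂ ⟨h, hp₂⟩
        have s1 := suffix_of_new hv₁ hn₁'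
        have s2 := suffix_of_new hv₂ hn₂'
        rcases le_total v₁.length v₂.length with h | h
        · exact new_unique s1 s2 hp₁ hp₂ hn₁' h
        · exact (new_unique s2 s1 hp₂ hp₁ hn₂' h).symm
      have hTsub : T ⊆ S ∪ (T \ S) := fun v hv => by
        by_cases h : v ∈ S
        · exact Or.inl h
        · exact Or.inr ⟨hv, h⟩
      calc palCount (u ++ [a]) = T.ncard := rfl
        _ ≤ (S ∪ (T \ S)).ncard := by
            exact Set.ncard_le_ncard hTsub
              ((palSet_finite u).union ((palSet_finite (u ++ [a])).diff))
        _ ≤ S.ncard + (T \ S).ncard :=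
            Set.ncard_union_le _ _
        _ ≤ S.ncard + 1 := by
            rcases hsub.eq_empty_or_singleton with h | ⟨x, h⟩ <;> simp [h]
        _ ≤ (u.length + 1) + 1 := by
            have : S.ncard = palCount u := rfl
            omega
        _ = (u ++ [a]).length + 1 := by simp
end
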